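/- arXiv:2412.08924 — 5 statements merged into one kernel-verified Lean document; each statement's English description precedes it below -/
import Mathlib

section
/- Let V and V' be finitely generated free ℤ-modules, and let α : V → V' be an injective ℤ-linear map whose cokernel V'/α(V) is finite of cardinality d. Then the induced ℚ-linear map α_ℚ : ℚ ⊗_ℤ V → ℚ ⊗_ℤ V' is bijective, and for every ℤ-linear endomorphism e' of V', the ℚ-linear endomorphism e := α_ℚ⁻¹ ∘ (e' ⊗ ℚ) ∘ α_ℚ of ℚ ⊗_ℤ V satisfies: (i) for every v ∈ V, the element d • e(1 ⊗ v) lies in the image of the canonical map V → ℚ ⊗_ℤ V; and (ii) if e' ∘ e' = e', then e ∘ e = e. -/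
open scoped TensorProduct

/-- Let `V` and `V'` be finitely generated free `ℤ`-modules and `α : V → V'` an injective
`ℤ`-linear map whose cokernel is finite of cardinality `d`.  Then the induced `ℚ`-linear
map `α_ℚ : ℚ ⊗[ℤ] V → ℚ ⊗[ℤ] V'` is bijective, and for every `ℤ`-linear endomorphism
`e'` of `V'`, the `ℚ`-linear endomorphism `e = α_ℚ⁻¹ ∘ e'_ℚ ∘ α_ℚ` (characterized by
`α_ℚ ∘ e = e'_ℚ ∘ α_ℚ`) satisfies: (i) `d • e (1 ⊗ v)` lies in the image of the canonical
map `V → ℚ ⊗[ℤ] V` for every `v ∈ V`; and (ii) if `e'` is idempotent then so is `e`. -/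
theorem statement0 (V V' : Type*)
    [AddCommGroup V] [Module ℤ V] [Module.Free ℤ V] [Module.Finite ℤ V]
    [AddCommGroup V'] [Module ℤ V'] [Module.Free ℤ V'] [Module.Finite ℤ V']
    (α : V →ₗ[ℤ] V') (hinj : Function.Injective α)
    (d : ℕ) (hfin : Finite (V' ⧸ LinearMap.range α))
    (hd : Nat.card (V' ⧸ LinearMap.range α) = d) :
    Function.Bijective (LinearMap.baseChange ℚ α) ∧
      ∀ (e' : V' →ₗ[ℤ] V') (e : ℚ ⊗[ℤ] V →ₗ[ℚ] ℚ ⊗[ℤ] V),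
        (LinearMap.baseChange ℚ α) ∘ₗ e
            = (LinearMap.baseChange ℚ e') ∘ₗ (LinearMap.baseChange ℚ α) →
        ((∀ v : V, (d : ℤ) • e ((1 : ℚ) ⊗ₜ[ℤ] v)
              ∈ Set.range (fun w : V => (1 : ℚ) ⊗ₜ[ℤ] w)) ∧
          (e' ∘ₗ e' = e' → e ∘ₗ e = e)) := by
  have hd0 : d ≠ 0 := by
    rw [← hd]
    exact Nat.card_pos.ne'
  -- `d • v'` lies in the range of `α` for every `v'`
  have hsmul : ∀ v' : V', (d : ℤ) • v' ∈ LinearMap.range α := by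
    intro v'
    have h : ((LinearMap.range α).mkQ) ((d : ℤ) • v') = 0 := by
      rw [map_zsmul, natCast_zsmul, ← hd]
      exact card_nsmul_eq_zero'
    rwa [Submodule.mkQ_apply, Submodule.Quotient.mk_eq_zero] at h
  haveI : Module.Flat ℤ ℚ := IsLocalization.flat ℚ (nonZeroDivisors ℤ)
  -- injectivity of the base change
  have hinjQ : Function.Injective (LinearMap.baseChange ℚ α) := by
    rw [show (LinearMap.baseChange ℚ α : ℚ ⊗[ℤ] V → ℚ ⊗[ℤ] V') = α.lTensor ℚ from
      LinearMap.baseChange_eq_ltensor α]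
    exact Module.Flat.lTensor_preserves_injective_linearMap α hinj
  -- surjectivity of the base change
  have hsurjQ : Function.Surjective (LinearMap.baseChange ℚ α) := by
    intro x
    have : x ∈ LinearMap.range (LinearMap.baseChange ℚ α) := by
      induction x using TensorProduct.induction_on with
      | zero => exact zero_mem _
      | tmul q v' =>
          obtain ⟨w, hw⟩ := hsmul v'
          refine ⟨(q / d) ⊗ₜ[ℤ] w, ?_⟩
          rw [LinearMap.baseChange_tmul, hw]
          calc (q / (d : ℚ)) ⊗ₜ[ℤ] ((d : ℤ) • v')
              = TensorProduct.mk ℤ ℚ V' (q / (d : ℚ)) ((d : ℤ) • v') := rfl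
            _ = (d : ℤ) • TensorProduct.mk ℤ ℚ V' (q / (d : ℚ)) v' :=
                map_zsmul (TensorProduct.mk ℤ ℚ V' (q / (d : ℚ))) _ _
            _ = (((d : ℤ) : ℚ)) • ((q / (d : ℚ)) ⊗ₜ[ℤ] v') :=
                (Int.cast_smul_eq_zsmul ℚ _ _).symm
            _ = ((((d : ℤ) : ℚ)) * (q / (d : ℚ))) ⊗ₜ[ℤ] v' := by
                rw [TensorProduct.smul_tmul', smul_eq_mul]
            _ = q ⊗ₜ[ℤ] v' := by
                congr 1
                push_cast
                field_simp
      | add x y hx hy => exact add_mem hx hy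
    exact this
  refine ⟨⟨hinjQ, hsurjQ⟩, fun e' e hcomm => ⟨?_, ?_⟩⟩
  · -- denominator bound
    intro v
    obtain ⟨w, hw⟩ := hsmul (e' (α v))
    refine ⟨w, ?_⟩
    apply hinjQ
    have h1 : (LinearMap.baseChange ℚ α) (e ((1:ℚ) ⊗ₜ[ℤ] v))
        = (LinearMap.baseChange ℚ e') ((LinearMap.baseChange ℚ α) ((1:ℚ) ⊗ₜ[ℤ] v)) :=
      LinearMap.congr_fun hcomm _
    calc (LinearMap.baseChange ℚ α) ((1:ℚ) ⊗ₜ[ℤ] w)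
        = (1:ℚ) ⊗ₜ[ℤ] (α w) := LinearMap.baseChange_tmul ..
      _ = TensorProduct.mk ℤ ℚ V' (1:ℚ) ((d : ℤ) • e' (α v)) := by rw [hw]; rfl
      _ = (d : ℤ) • ((1:ℚ) ⊗ₜ[ℤ] (e' (α v))) := map_zsmul (TensorProduct.mk ℤ ℚ V' 1) _ _
      _ = (d : ℤ) • ((LinearMap.baseChange ℚ e') ((LinearMap.baseChange ℚ α) ((1:ℚ) ⊗ₜ[ℤ] v))) := by
          rw [LinearMap.baseChange_tmul, LinearMap.baseChange_tmul]
      _ = (d : ℤ) • ((LinearMap.baseChange ℚ α) (e ((1:ℚ) ⊗ₜ[ℤ] v))) := by rw [h1]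
      _ = (LinearMap.baseChange ℚ α) ((d : ℤ) • e ((1:ℚ) ⊗ₜ[ℤ] v)) :=
          (map_zsmul (LinearMap.baseChange ℚ α) _ _).symm
  · -- idempotency
    intro hidem
    have h1 : ∀ y, (LinearMap.baseChange ℚ α) (e y)
        = (LinearMap.baseChange ℚ e') ((LinearMap.baseChange ℚ α) y) :=
      fun y => LinearMap.congr_fun hcomm y
    have h2 : (LinearMap.baseChange ℚ e') ∘ₗ (LinearMap.baseChange ℚ e')
        = LinearMap.baseChange ℚ e' := by
      rw [← LinearMap.baseChange_comp, hidem]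
    apply LinearMap.ext
    intro x
    apply hinjQ
    simp only [LinearMap.comp_apply, h1]
    exact LinearMap.congr_fun h2 _
end

section
/- Fix integers r ≥ s ≥ 1, set m = r + s, fix c₀ ∈ ℝ, and fix an integer ℓ with r+1 ≤ ℓ ≤ m. Suppose w, w' ∈ Y(c₀) satisfy: w_ℓ ≠ 0 and w'_ℓ ≠ 0; w_i·w_ℓ = w'_i·w'_ℓ for every 1 ≤ i ≤ s with i ≠ ℓ − r; and w_j = w'_j for every s+1 ≤ j ≤ m. Then w = w'. -/
/-- 1-based coordinates of a point of `ℝ^m`: `coord w i = w_i` for `1 ≤ i ≤ m`,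
and `0` otherwise. -/
noncomputable def coord {m : ℕ} (w : Fin m → ℝ) (i : ℕ) : ℝ :=
  if h : 1 ≤ i ∧ i ≤ m then w ⟨i - 1, by omega⟩ else 0

/-- Fix `r ≥ s ≥ 1`, `m = r + s`, `c₀ ∈ ℝ`, and an index `ℓ` with `r + 1 ≤ ℓ ≤ m`.
If `w, w'` lie on the quadric `∑_{i=1}^{s} w_i w_{r+i} + ∑_{j=s+1}^{r} w_j² = c₀`,
both have `w_ℓ ≠ 0`, have equal products `w_i·w_ℓ` for all `1 ≤ i ≤ s` with
`i ≠ ℓ - r`, and equal coordinates `w_j` for `s + 1 ≤ j ≤ m`, then `w = w'`. -/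
theorem statement2 (r s : ℕ) (hs : 1 ≤ s) (hsr : s ≤ r)
    (m : ℕ) (hm : m = r + s)
    (c₀ : ℝ) (ℓ : ℕ) (hℓ1 : r + 1 ≤ ℓ) (hℓ2 : ℓ ≤ m)
    (w w' : Fin m → ℝ)
    (hw : ∑ i ∈ Finset.Icc 1 s, coord w i * coord w (r + i)
        + ∑ j ∈ Finset.Icc (s + 1) r, (coord w j) ^ 2 = c₀)
    (hw' : ∑ i ∈ Finset.Icc 1 s, coord w' i * coord w' (r + i)
        + ∑ j ∈ Finset.Icc (s + 1) r, (coord w' j) ^ 2 = c₀)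
    (hne : coord w ℓ ≠ 0) (hne' : coord w' ℓ ≠ 0)
    (hprod : ∀ i : ℕ, 1 ≤ i → i ≤ s → i ≠ ℓ - r →
      coord w i * coord w ℓ = coord w' i * coord w' ℓ)
    (htail : ∀ j : ℕ, s + 1 ≤ j → j ≤ m → coord w j = coord w' j) :
    w = w' := by
  subst hm
  set i₀ := ℓ - r with hi₀
  have hℓeq : ℓ = r + i₀ := by omega
  have hL : coord w ℓ = coord w' ℓ := htail ℓ (by omega) hℓ2
  have hfront : ∀ i, 1 ≤ i → i ≤ s → i ≠ i₀ → coord w i = coord w' i := by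
    intro i h1 h2 h3
    have h := hprod i h1 h2 h3
    rw [hL] at h
    exact mul_right_cancel₀ hne' h
  have h2 : ∑ j ∈ Finset.Icc (s+1) r, (coord w j)^2
      = ∑ j ∈ Finset.Icc (s+1) r, (coord w' j)^2 := by
    apply Finset.sum_congr rfl
    intro j hj
    simp only [Finset.mem_Icc] at hj
    rw [htail j hj.1 (by omega)]
  have key : ∑ i ∈ Finset.Icc 1 s, coord w i * coord w (r+i)
      = ∑ i ∈ Finset.Icc 1 s, coord w' i * coord w' (r+i) := by linarith
  have hmem : i₀ ∈ Finset.Icc 1 s := by simp only [Finset.mem_Icc]; omega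
  have e1 : ∑ i ∈ (Finset.Icc 1 s).erase i₀, coord w i * coord w (r+i)
      = ∑ i ∈ (Finset.Icc 1 s).erase i₀, coord w' i * coord w' (r+i) := by
    apply Finset.sum_congr rfl
    intro i hi
    rw [Finset.mem_erase, Finset.mem_Icc] at hi
    rw [hfront i hi.2.1 hi.2.2 hi.1, htail (r+i) (by omega) (by omega)]
  have hsplitw := Finset.add_sum_erase (Finset.Icc 1 s)
    (fun i => coord w i * coord w (r+i)) hmem
  have hsplitw' := Finset.add_sum_erase (Finset.Icc 1 s)
    (fun i => coord w' i * coord w' (r+i)) hmem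
  have hterm : coord w i₀ * coord w (r+i₀) = coord w' i₀ * coord w' (r+i₀) := by
    linarith
  rw [← hℓeq, hL] at hterm
  have hi0eq : coord w i₀ = coord w' i₀ := mul_right_cancel₀ hne' hterm
  have hall : ∀ i, 1 ≤ i → i ≤ r + s → coord w i = coord w' i := by
    intro i h1 h2
    by_cases hc : i ≤ s
    · by_cases hc2 : i = i₀
      · rw [hc2]; exact hi0eq
      · exact hfront i h1 hc hc2
    · exact htail i (by omega) h2
  funext x
  have hx := x.isLt
  have h := hall (x.1+1) (by omega) (by omega)
  simp only [coord, Nat.add_sub_cancel] at h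
  rw [dif_pos ⟨by omega, by omega⟩, dif_pos ⟨by omega, by omega⟩] at h
  simpa using h
end

section
/- Fix integers r ≥ s ≥ 1, set m = r + s, and fix c₀ ∈ ℝ and real constants κ, κ' > 0. Let W be the set of all w ∈ Y(c₀) such that: (a) |w_j| ≤ κ for every s+1 ≤ j ≤ m; (b) if some coordinate w_ℓ with r+1 ≤ ℓ ≤ m is nonzero and ℓ₀ is the least such index, then |w_i·w_{ℓ₀}| ≤ κ' for every 1 ≤ i ≤ s; and (c) if w_ℓ = 0 for every r+1 ≤ ℓ ≤ m, then |w_i| ≤ κ for every 1 ≤ i ≤ m. Then there exists a real constant ρ > 0 such that for every positive integer ν, the set {w ∈ W : ν·w ∈ ℤ^m} is finite of cardinality at most ρ·ν^{m+s−2}. -/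
private lemma coord_succ {m : ℕ} (w : Fin m → ℝ) (k : ℕ) (hk : k < m) :
    coord w (k + 1) = w ⟨k, hk⟩ := by
  rw [coord, dif_pos ⟨by omega, by omega⟩]
  rfl

private lemma coord_ge {m : ℕ} (w : Fin m → ℝ) (k : ℕ) (hk : m ≤ k) :
    coord w (k + 1) = 0 := by
  rw [coord, dif_neg (by omega)]

private lemma quadric_reindex (r s : ℕ) (w : Fin (r + s) → ℝ) :
    (∑ i ∈ Finset.Icc 1 s, coord w i * coord w (r + i))
      + ∑ j ∈ Finset.Icc (s + 1) r, (coord w j) ^ 2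
    = (∑ x ∈ Finset.range s, coord w (x + 1) * coord w (r + x + 1))
      + ∑ x ∈ Finset.range (r - s), (coord w (s + x + 1)) ^ 2 := by
  rw [← Finset.Ico_add_one_right_eq_Icc 1 s, ← Finset.Ico_add_one_right_eq_Icc (s + 1) r,
    Finset.sum_Ico_eq_sum_range, Finset.sum_Ico_eq_sum_range]
  congr 1
  · refine Finset.sum_congr (by congr 1) fun x hx => ?_
    rw [show 1 + x = x + 1 by omega, show r + (x + 1) = r + x + 1 by omega]
  · refine Finset.sum_congr (by congr 1; omega) fun x hx => ?_
    rw [show s + 1 + x = s + x + 1 by omega]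

/-- index of the first nonzero coordinate in the last block (0-based), or `s`. -/
private noncomputable def idxF (r s : ℕ) (w : Fin (r + s) → ℝ) : ℕ :=
  sInf ({x | coord w (r + x + 1) ≠ 0} ∪ {s})

private lemma idxF_le (r s : ℕ) (w : Fin (r + s) → ℝ) : idxF r s w ≤ s :=
  Nat.sInf_le (Or.inr rfl)

private lemma idxF_min (r s : ℕ) (w : Fin (r + s) → ℝ) (x : ℕ) (hx : x < idxF r s w) :
    coord w (r + x + 1) = 0 := by
  have h := Nat.notMem_of_lt_sInf hx
  by_contra hne
  exact h (Or.inl hne)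

private lemma idxF_spec (r s : ℕ) (w : Fin (r + s) → ℝ) (h : idxF r s w < s) :
    coord w (r + idxF r s w + 1) ≠ 0 := by
  have hmem : idxF r s w ∈ ({x | coord w (r + x + 1) ≠ 0} ∪ {s} : Set ℕ) :=
    Nat.sInf_mem ⟨s, Or.inr rfl⟩
  rcases hmem with hmem | hmem
  · exact hmem
  · exfalso
    simp only [Set.mem_singleton_iff] at hmem
    omega

private lemma idxF_all (r s : ℕ) (w : Fin (r + s) → ℝ) (h : ¬ idxF r s w < s) (x : ℕ) :
    coord w (r + x + 1) = 0 := by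
  rcases lt_or_ge x s with hx | hx
  · exact idxF_min r s w x (by have := idxF_le r s w; omega)
  · exact coord_ge w (r + x) (by omega)

/-- exponent budget for each coordinate. -/
private def eexp (r s j k : ℕ) : ℕ :=
  if j < s then
    if k = j then 0 else if k < s then 2 else if r ≤ k ∧ k < r + j then 0 else 1
  else if k < r then 1 else 0

private lemma eexp_sum (r s : ℕ) (hs : 1 ≤ s) (hsr : s ≤ r) :
    ∀ j, (∑ i : Fin (r + s), eexp r s j (i : ℕ)) ≤ r + s + s - 2 := by
  intro j
  rw [Fin.sum_univ_eq_sum_range (fun k => eexp r s j k) (r + s)]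
  rw [Finset.range_eq_Ico,
    ← Finset.sum_Ico_consecutive (fun k => eexp r s j k)
      (Nat.zero_le r) (Nat.le_add_right r s),
    ← Finset.sum_Ico_consecutive (fun k => eexp r s j k)
      (Nat.zero_le s) hsr]
  by_cases hjs : j < s
  · have hA : (∑ k ∈ Finset.Ico 0 s, eexp r s j k) ≤ (s - 1) * 2 := by
      have hj0 : eexp r s j j = 0 := by simp [eexp, hjs]
      have hjmem : j ∈ Finset.Ico 0 s := by
        rw [Finset.mem_Ico]; omega
      calc (∑ k ∈ Finset.Ico 0 s, eexp r s j k)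
          = ∑ k ∈ (Finset.Ico 0 s).erase j, eexp r s j k :=
            (Finset.sum_erase _ hj0).symm
        _ ≤ ((Finset.Ico 0 s).erase j).card • 2 :=
            Finset.sum_le_card_nsmul _ _ 2 (fun x hx => by
              simp only [eexp]; split_ifs <;> omega)
        _ = (s - 1) * 2 := by
            rw [Finset.card_erase_of_mem hjmem, Nat.card_Ico, smul_eq_mul]; omega
    have hB : (∑ k ∈ Finset.Ico s r, eexp r s j k) ≤ (r - s) * 1 := by
      calc (∑ k ∈ Finset.Ico s r, eexp r s j k)
          ≤ (Finset.Ico s r).card • 1 :=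
            Finset.sum_le_card_nsmul _ _ 1 (fun x hx => by
              rw [Finset.mem_Ico] at hx
              simp only [eexp]; split_ifs <;> omega)
        _ = (r - s) * 1 := by rw [Nat.card_Ico, smul_eq_mul]
    have hC : (∑ k ∈ Finset.Ico r (r + s), eexp r s j k) ≤ s * 1 := by
      calc (∑ k ∈ Finset.Ico r (r + s), eexp r s j k)
          ≤ (Finset.Ico r (r + s)).card • 1 :=
            Finset.sum_le_card_nsmul _ _ 1 (fun x hx => by
              rw [Finset.mem_Ico] at hx
              simp only [eexp]; split_ifs <;> omega)
        _ = s * 1 := by rw [Nat.card_Ico, smul_eq_mul]; omega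
    omega
  · have hA : (∑ k ∈ Finset.Ico 0 s, eexp r s j k) ≤ s * 1 := by
      calc (∑ k ∈ Finset.Ico 0 s, eexp r s j k)
          ≤ (Finset.Ico 0 s).card • 1 :=
            Finset.sum_le_card_nsmul _ _ 1 (fun x hx => by
              simp only [eexp]; split_ifs <;> omega)
        _ = s * 1 := by rw [Nat.card_Ico, smul_eq_mul]; omega
    have hB : (∑ k ∈ Finset.Ico s r, eexp r s j k) ≤ (r - s) * 1 := by
      calc (∑ k ∈ Finset.Ico s r, eexp r s j k)
          ≤ (Finset.Ico s r).card • 1 :=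
            Finset.sum_le_card_nsmul _ _ 1 (fun x hx => by
              simp only [eexp]; split_ifs <;> omega)
        _ = (r - s) * 1 := by rw [Nat.card_Ico, smul_eq_mul]
    have hC : (∑ k ∈ Finset.Ico r (r + s), eexp r s j k) ≤ 0 := by
      calc (∑ k ∈ Finset.Ico r (r + s), eexp r s j k)
          ≤ (Finset.Ico r (r + s)).card • 0 :=
            Finset.sum_le_card_nsmul _ _ 0 (fun x hx => by
              rw [Finset.mem_Ico] at hx
              simp only [eexp]; split_ifs <;> omega)
        _ = 0 := by rw [smul_zero]
    omega

set_option maxHeartbeats 1600000 in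
/-- Fix `r ≥ s ≥ 1`, `m = r + s`, `c₀ ∈ ℝ` and constants `κ, κ' > 0`.  Let `W` be the set of
points `w` of the quadric `∑_{i=1}^{s} w_i w_{r+i} + ∑_{j=s+1}^{r} w_j² = c₀` such that:
(a) `|w_j| ≤ κ` for `s+1 ≤ j ≤ m`; (b) if `ℓ₀` is the least index in `{r+1, …, m}` with
`w_{ℓ₀} ≠ 0` then `|w_i · w_{ℓ₀}| ≤ κ'` for all `1 ≤ i ≤ s`; and (c) if `w_ℓ = 0` for all
`r+1 ≤ ℓ ≤ m` then `|w_i| ≤ κ` for all `1 ≤ i ≤ m`.  Then there is a constant `ρ > 0`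
such that for every positive integer `ν` the set of `w ∈ W` with `ν·w ∈ ℤ^m` is finite
of cardinality at most `ρ · ν^(m+s-2)`. -/
theorem statement3 (r s : ℕ) (hs : 1 ≤ s) (hsr : s ≤ r)
    (m : ℕ) (hm : m = r + s)
    (c₀ κ κ' : ℝ) (hκ : 0 < κ) (hκ' : 0 < κ')
    (W : Set (Fin m → ℝ))
    (hW : W = {w : Fin m → ℝ |
      (∑ i ∈ Finset.Icc 1 s, coord w i * coord w (r + i)
          + ∑ j ∈ Finset.Icc (s + 1) r, (coord w j) ^ 2 = c₀) ∧
      (∀ j : ℕ, s + 1 ≤ j → j ≤ m → |coord w j| ≤ κ) ∧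
      (∀ ℓ₀ : ℕ, r + 1 ≤ ℓ₀ → ℓ₀ ≤ m → coord w ℓ₀ ≠ 0 →
        (∀ ℓ : ℕ, r + 1 ≤ ℓ → ℓ < ℓ₀ → coord w ℓ = 0) →
        ∀ i : ℕ, 1 ≤ i → i ≤ s → |coord w i * coord w ℓ₀| ≤ κ') ∧
      ((∀ ℓ : ℕ, r + 1 ≤ ℓ → ℓ ≤ m → coord w ℓ = 0) →
        ∀ i : ℕ, 1 ≤ i → i ≤ m → |coord w i| ≤ κ)}) :
    ∃ ρ : ℝ, 0 < ρ ∧ ∀ ν : ℕ, 0 < ν →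
      (W ∩ {w : Fin m → ℝ | ∀ i : Fin m, ∃ z : ℤ, (ν : ℝ) * w i = (z : ℝ)}).Finite ∧
      ((W ∩ {w : Fin m → ℝ | ∀ i : Fin m, ∃ z : ℤ, (ν : ℝ) * w i = (z : ℝ)}).ncard : ℝ)
        ≤ ρ * (ν : ℝ) ^ (m + s - 2) := by
  classical
  subst hm
  have hK1 : (1 : ℤ) ≤ ⌈κ⌉ := by
    have := Int.ceil_pos.mpr hκ; omega
  have hK'1 : (1 : ℤ) ≤ ⌈κ'⌉ := by
    have := Int.ceil_pos.mpr hκ'; omega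
  set K : ℤ := ⌈κ⌉ with hKdef
  set K' : ℤ := ⌈κ'⌉ with hK'def
  have hκK : κ ≤ (K : ℝ) := Int.le_ceil κ
  have hκK' : κ' ≤ (K' : ℝ) := Int.le_ceil κ'
  have hK1R : (1 : ℝ) ≤ (K : ℝ) := by exact_mod_cast hK1
  have hK'1R : (1 : ℝ) ≤ (K' : ℝ) := by exact_mod_cast hK'1
  set c : ℝ := (2 * (K : ℝ) + 1) * (2 * (K' : ℝ) + 1) with hcdef
  have hc1 : (1 : ℝ) ≤ c := by nlinarith
  have hcK : 2 * (K : ℝ) + 1 ≤ c := by nlinarith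
  have hcK' : 2 * (K' : ℝ) + 1 ≤ c := by nlinarith
  have hc0 : (0 : ℝ) < c := by linarith
  refine ⟨((s : ℝ) + 1) * c ^ (r + s), by positivity, ?_⟩
  intro ν hν
  have hν1 : (1 : ℝ) ≤ (ν : ℝ) := by exact_mod_cast hν
  have hν0 : (0 : ℝ) < (ν : ℝ) := by linarith
  have hνZ : (1 : ℤ) ≤ (ν : ℤ) := by exact_mod_cast hν
  set M : ℤ := K * (ν : ℤ) with hMdef
  set M' : ℤ := K' * (ν : ℤ) ^ 2 with hM'def
  have hM0 : (0 : ℤ) ≤ M := by nlinarith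
  have hM'0 : (0 : ℤ) ≤ M' := by nlinarith
  have hMcast : (M : ℝ) = (K : ℝ) * (ν : ℝ) := by rw [hMdef]; push_cast; ring
  have hM'cast : (M' : ℝ) = (K' : ℝ) * (ν : ℝ) ^ 2 := by rw [hM'def]; push_cast; ring
  set G : ℕ → Fin (r + s) → Finset ℤ := fun j i =>
    if j < s then
      if (i : ℕ) = j then {0}
      else if (i : ℕ) < s then Finset.Icc (-M') M'
      else if r ≤ (i : ℕ) ∧ (i : ℕ) < r + j then {0}
      else Finset.Icc (-M) M
    else if (i : ℕ) < r then Finset.Icc (-M) M else {0} with hGdef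
  set T : Finset ((_ : ℕ) × (Fin (r + s) → ℤ)) :=
    (Finset.range (s + 1)).sigma fun j => Fintype.piFinset (G j) with hTdef
  set F : (Fin (r + s) → ℝ) → (_ : ℕ) × (Fin (r + s) → ℤ) := fun w =>
    ⟨idxF r s w, fun i =>
      if (i : ℕ) = idxF r s w ∧ idxF r s w < s then 0
      else ⌊(ν : ℝ) * coord w ((i : ℕ) + 1)⌋⟩ with hFdef
  set S : Set (Fin (r + s) → ℝ) :=
    W ∩ {w : Fin (r + s) → ℝ | ∀ i : Fin (r + s), ∃ z : ℤ, (ν : ℝ) * w i = (z : ℝ)}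
    with hSdef
  -- integrality of the rescaled coordinates
  have hz_int : ∀ w ∈ S, ∀ k, k < r + s →
      ((⌊(ν : ℝ) * coord w (k + 1)⌋ : ℤ) : ℝ) = (ν : ℝ) * coord w (k + 1) := by
    intro w hw k hk
    obtain ⟨z, hz⟩ := hw.2 ⟨k, hk⟩
    rw [coord_succ w k hk, hz, Int.floor_intCast]
  have hzabs : ∀ w ∈ S, ∀ k, ∀ hk : k < r + s, ∀ B : ℤ,
      |(ν : ℝ) * coord w (k + 1)| ≤ (B : ℝ) →
      ⌊(ν : ℝ) * coord w (k + 1)⌋ ∈ Finset.Icc (-B) B := by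
    intro w hw k hk B hB
    have h1 := hz_int w hw k hk
    have h2 : |(⌊(ν : ℝ) * coord w (k + 1)⌋ : ℤ)| ≤ B := by
      have h3 : |((⌊(ν : ℝ) * coord w (k + 1)⌋ : ℤ) : ℝ)| ≤ (B : ℝ) := by rw [h1]; exact hB
      exact_mod_cast h3
    rw [Finset.mem_Icc]
    exact ⟨neg_le_of_abs_le h2, le_of_abs_le h2⟩
  -- bound from condition (a)
  have hAbound : ∀ w ∈ S, ∀ k, s ≤ k → k < r + s →
      |(ν : ℝ) * coord w (k + 1)| ≤ (M : ℝ) := by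
    intro w hw k hks hk
    have hwW := hw.1; rw [hW] at hwW
    obtain ⟨-, ha, -, -⟩ := hwW
    have h := ha (k + 1) (by omega) (by omega)
    rw [abs_mul, abs_of_pos hν0, hMcast]
    nlinarith [abs_nonneg (coord w (k + 1))]
  -- bound from condition (b)
  have hBbound : ∀ w ∈ S, idxF r s w < s → ∀ k, k < s →
      |(ν : ℝ) * coord w (k + 1)| ≤ (M' : ℝ) := by
    intro w hw hjs k hks
    have hwW := hw.1; rw [hW] at hwW
    obtain ⟨-, -, hb, -⟩ := hwW
    have hcc : coord w (r + idxF r s w + 1) ≠ 0 := idxF_spec r s w hjs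
    have hccz := hz_int w hw (r + idxF r s w) (by omega)
    have hfl0 : ⌊(ν : ℝ) * coord w (r + idxF r s w + 1)⌋ ≠ 0 := by
      intro h0
      rw [h0] at hccz
      push_cast at hccz
      rcases mul_eq_zero.mp hccz.symm with h | h
      · exact absurd h (ne_of_gt hν0)
      · exact hcc h
    have h1 : 1 ≤ |(ν : ℝ) * coord w (r + idxF r s w + 1)| := by
      rw [← hccz, ← Int.cast_abs]
      exact_mod_cast Int.one_le_abs hfl0
    have hmin : ∀ ℓ, r + 1 ≤ ℓ → ℓ < r + idxF r s w + 1 → coord w ℓ = 0 := by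
      intro ℓ hl1 hl2
      rw [show ℓ = r + (ℓ - r - 1) + 1 by omega]
      exact idxF_min r s w _ (by omega)
    have hbb := hb (r + idxF r s w + 1) (by omega)
      (by have := hjs; omega) hcc hmin (k + 1) (by omega) (by omega)
    rw [abs_mul] at hbb h1 ⊢
    rw [abs_of_pos hν0] at h1 ⊢
    rw [hM'cast]
    calc (ν : ℝ) * |coord w (k + 1)|
        ≤ (ν : ℝ) * |coord w (k + 1)| * ((ν : ℝ) * |coord w (r + idxF r s w + 1)|) :=
          le_mul_of_one_le_right (by positivity) h1
      _ = (ν : ℝ) ^ 2 * (|coord w (k + 1)| * |coord w (r + idxF r s w + 1)|) := by ring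
      _ ≤ (ν : ℝ) ^ 2 * κ' := mul_le_mul_of_nonneg_left hbb (by positivity)
      _ ≤ (ν : ℝ) ^ 2 * (K' : ℝ) := mul_le_mul_of_nonneg_left hκK' (by positivity)
      _ = (K' : ℝ) * (ν : ℝ) ^ 2 := by ring
  -- bound from condition (c)
  have hCbound : ∀ w ∈ S, ¬ idxF r s w < s → ∀ k, k < r + s →
      |(ν : ℝ) * coord w (k + 1)| ≤ (M : ℝ) := by
    intro w hw hjs k hk
    have hwW := hw.1; rw [hW] at hwW
    obtain ⟨-, -, -, hc⟩ := hwW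
    have hall : ∀ ℓ, r + 1 ≤ ℓ → ℓ ≤ r + s → coord w ℓ = 0 := by
      intro ℓ h1 h2
      rw [show ℓ = r + (ℓ - r - 1) + 1 by omega]
      exact idxF_all r s w hjs _
    have h := hc hall (k + 1) (by omega) (by omega)
    rw [abs_mul, abs_of_pos hν0, hMcast]
    nlinarith [abs_nonneg (coord w (k + 1))]
  -- the image of `S` under `F` lies in `T`
  have himg : ∀ w ∈ S, F w ∈ T := by
    intro w hw
    have hmem1 : idxF r s w ∈ Finset.range (s + 1) :=
      Finset.mem_range.mpr (by have := idxF_le r s w; omega)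
    have hmem2 : (fun i : Fin (r + s) =>
        if (i : ℕ) = idxF r s w ∧ idxF r s w < s then 0
        else ⌊(ν : ℝ) * coord w ((i : ℕ) + 1)⌋) ∈ Fintype.piFinset (G (idxF r s w)) := by
      rw [Fintype.mem_piFinset]
      intro i
      simp only [hGdef]
      by_cases hjs : idxF r s w < s
      · by_cases hij : (i : ℕ) = idxF r s w
        · rw [if_pos (show (i : ℕ) = idxF r s w ∧ idxF r s w < s from ⟨hij, hjs⟩),
            if_pos hjs, if_pos hij]
          exact Finset.mem_singleton_self 0
        · rw [if_neg (show ¬((i : ℕ) = idxF r s w ∧ idxF r s w < s) from fun h => hij h.1),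
            if_pos hjs, if_neg hij]
          by_cases his : (i : ℕ) < s
          · rw [if_pos his]
            exact hzabs w hw i.1 i.2 M' (hBbound w hw hjs i.1 his)
          · rw [if_neg his]
            by_cases hmid2 : r ≤ (i : ℕ) ∧ (i : ℕ) < r + idxF r s w
            · rw [if_pos hmid2]
              have h0 : coord w ((i : ℕ) + 1) = 0 := by
                rw [show (i : ℕ) + 1 = r + ((i : ℕ) - r) + 1 by omega]
                exact idxF_min r s w _ (by omega)
              simp [h0]
            · rw [if_neg hmid2]
              exact hzabs w hw i.1 i.2 M (hAbound w hw i.1 (by omega) i.2)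
      · rw [if_neg (show ¬((i : ℕ) = idxF r s w ∧ idxF r s w < s) from fun h => hjs h.2),
          if_neg hjs]
        by_cases hir : (i : ℕ) < r
        · rw [if_pos hir]
          exact hzabs w hw i.1 i.2 M (hCbound w hw hjs i.1 i.2)
        · rw [if_neg hir]
          have h0 : coord w ((i : ℕ) + 1) = 0 := by
            rw [show (i : ℕ) + 1 = r + ((i : ℕ) - r) + 1 by omega]
            exact idxF_all r s w hjs _
          simp [h0]
    rw [hTdef, hFdef]
    exact Finset.mem_sigma.mpr ⟨hmem1, hmem2⟩
  -- `F` is injective on `S`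
  have hinj : Set.InjOn F S := by
    intro w hw w' hw' hFeq
    simp only [hFdef] at hFeq
    have h1 : idxF r s w = idxF r s w' := congrArg Sigma.fst hFeq
    have h2 := congrArg (fun p : (_ : ℕ) × (Fin (r + s) → ℤ) => p.snd) hFeq
    simp only at h2
    have hzeq : ∀ k, ∀ hk : k < r + s, ¬(k = idxF r s w ∧ idxF r s w < s) →
        coord w (k + 1) = coord w' (k + 1) := by
      intro k hk hcond
      have h3 := congrFun h2 ⟨k, hk⟩
      simp only at h3
      rw [if_neg hcond, if_neg (by rw [← h1]; exact hcond)] at h3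
      have e1 := hz_int w hw k hk
      have e2 := hz_int w' hw' k hk
      have e3 : (ν : ℝ) * coord w (k + 1) = (ν : ℝ) * coord w' (k + 1) := by
        rw [← e1, ← e2, h3]
      exact mul_left_cancel₀ (ne_of_gt hν0) e3
    by_cases hjs : idxF r s w < s
    · have hwW := hw.1; rw [hW] at hwW; obtain ⟨hq, -, -, -⟩ := hwW
      have hwW' := hw'.1; rw [hW] at hwW'; obtain ⟨hq', -, -, -⟩ := hwW'
      rw [quadric_reindex r s w] at hq
      rw [quadric_reindex r s w'] at hq'
      have hjr : idxF r s w ∈ Finset.range s := Finset.mem_range.mpr hjs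
      have hmid : (∑ x ∈ Finset.range (r - s), (coord w (s + x + 1)) ^ 2)
          = ∑ x ∈ Finset.range (r - s), (coord w' (s + x + 1)) ^ 2 := by
        refine Finset.sum_congr rfl fun x hx => ?_
        have hx' := Finset.mem_range.mp hx
        rw [hzeq (s + x) (by omega) (by rintro ⟨hh, -⟩; omega)]
      have hrest : (∑ x ∈ (Finset.range s).erase (idxF r s w),
            coord w (x + 1) * coord w (r + x + 1))
          = ∑ x ∈ (Finset.range s).erase (idxF r s w),
            coord w' (x + 1) * coord w' (r + x + 1) := by
        refine Finset.sum_congr rfl fun x hx => ?_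
        obtain ⟨hxj, hxr⟩ := Finset.mem_erase.mp hx
        have hx' := Finset.mem_range.mp hxr
        rw [hzeq x (by omega) (by rintro ⟨hh, -⟩; exact hxj hh),
          hzeq (r + x) (by omega) (by rintro ⟨hh, -⟩; omega)]
      have hsplit := Finset.add_sum_erase (Finset.range s)
        (fun x => coord w (x + 1) * coord w (r + x + 1)) hjr
      have hsplit' := Finset.add_sum_erase (Finset.range s)
        (fun x => coord w' (x + 1) * coord w' (r + x + 1)) hjr
      have hcc : coord w (r + idxF r s w + 1) = coord w' (r + idxF r s w + 1) :=
        hzeq (r + idxF r s w) (by omega) (by rintro ⟨hh, -⟩; omega)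
      have hcc0 : coord w' (r + idxF r s w + 1) ≠ 0 := by
        rw [← hcc]; exact idxF_spec r s w hjs
      have hprod : coord w (idxF r s w + 1) * coord w (r + idxF r s w + 1)
          = coord w' (idxF r s w + 1) * coord w' (r + idxF r s w + 1) := by
        rw [← hsplit] at hq
        rw [← hsplit'] at hq'
        linarith [hq, hq', hrest, hmid]
      rw [hcc] at hprod
      have hj1 : coord w (idxF r s w + 1) = coord w' (idxF r s w + 1) :=
        mul_right_cancel₀ hcc0 hprod
      funext i
      by_cases hij : (i : ℕ) = idxF r s w
      · calc w i = coord w ((i : ℕ) + 1) := (coord_succ w i.1 i.2).symm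
          _ = coord w' ((i : ℕ) + 1) := by rw [hij]; exact hj1
          _ = w' i := coord_succ w' i.1 i.2
      · calc w i = coord w ((i : ℕ) + 1) := (coord_succ w i.1 i.2).symm
          _ = coord w' ((i : ℕ) + 1) := hzeq i.1 i.2 (by tauto)
          _ = w' i := coord_succ w' i.1 i.2
    · funext i
      calc w i = coord w ((i : ℕ) + 1) := (coord_succ w i.1 i.2).symm
        _ = coord w' ((i : ℕ) + 1) := hzeq i.1 i.2 (by tauto)
        _ = w' i := coord_succ w' i.1 i.2
  -- finiteness and cardinal comparison with `T`
  have himgsub : F '' S ⊆ ↑T := by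
    rintro _ ⟨w, hw, rfl⟩
    exact himg w hw
  have hSfin : S.Finite := Set.Finite.of_finite_image (T.finite_toSet.subset himgsub) hinj
  refine ⟨hSfin, ?_⟩
  have hcard1 : S.ncard ≤ T.card := by
    rw [← Set.ncard_coe_finset, ← Set.ncard_image_of_injOn hinj]
    exact Set.ncard_le_ncard himgsub T.finite_toSet
  -- per-coordinate cardinality bounds
  have hIccM : ((Finset.Icc (-M) M).card : ℝ) ≤ c * (ν : ℝ) := by
    rw [Int.card_Icc]
    have hnn : (0 : ℤ) ≤ M + 1 - -M := by omega
    have h1 : ((M + 1 - -M).toNat : ℝ) = 2 * (M : ℝ) + 1 := by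
      have h3 := congrArg (fun z : ℤ => (z : ℝ)) (Int.toNat_of_nonneg hnn)
      push_cast at h3 ⊢
      linarith
    rw [h1, hMcast]
    nlinarith
  have hν2 : (1 : ℝ) ≤ (ν : ℝ) ^ 2 := by nlinarith
  have hIccM' : ((Finset.Icc (-M') M').card : ℝ) ≤ c * (ν : ℝ) ^ 2 := by
    rw [Int.card_Icc]
    have hnn : (0 : ℤ) ≤ M' + 1 - -M' := by omega
    have h1 : ((M' + 1 - -M').toNat : ℝ) = 2 * (M' : ℝ) + 1 := by
      have h3 := congrArg (fun z : ℤ => (z : ℝ)) (Int.toNat_of_nonneg hnn)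
      push_cast at h3 ⊢
      linarith
    rw [h1, hM'cast]
    nlinarith
  have hfac : ∀ j, ∀ i : Fin (r + s),
      ((G j i).card : ℝ) ≤ c * (ν : ℝ) ^ eexp r s j (i : ℕ) := by
    intro j i
    simp only [hGdef, eexp]
    split_ifs with h1 h2 h3 h4 h5
    · simp only [Finset.card_singleton, Nat.cast_one, pow_zero, mul_one]
      exact hc1
    · calc ((Finset.Icc (-M') M').card : ℝ) ≤ c * (ν : ℝ) ^ 2 := hIccM'
        _ = c * (ν : ℝ) ^ 2 := rfl
    · simp only [Finset.card_singleton, Nat.cast_one, pow_zero, mul_one]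
      exact hc1
    · calc ((Finset.Icc (-M) M).card : ℝ) ≤ c * (ν : ℝ) := hIccM
        _ = c * (ν : ℝ) ^ 1 := by ring
    · calc ((Finset.Icc (-M) M).card : ℝ) ≤ c * (ν : ℝ) := hIccM
        _ = c * (ν : ℝ) ^ 1 := by ring
    · simp only [Finset.card_singleton, Nat.cast_one, pow_zero, mul_one]
      exact hc1
  -- per-piece bound
  have hperj : ∀ j ∈ Finset.range (s + 1),
      ((Fintype.piFinset (G j)).card : ℝ) ≤ c ^ (r + s) * (ν : ℝ) ^ (r + s + s - 2) := by
    intro j hj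
    rw [Fintype.card_piFinset]
    push_cast
    calc (∏ i : Fin (r + s), ((G j i).card : ℝ))
        ≤ ∏ i : Fin (r + s), (c * (ν : ℝ) ^ eexp r s j (i : ℕ)) :=
          Finset.prod_le_prod (fun i _ => Nat.cast_nonneg _) (fun i _ => hfac j i)
      _ = c ^ (r + s) * (ν : ℝ) ^ (∑ i : Fin (r + s), eexp r s j (i : ℕ)) := by
          rw [Finset.prod_mul_distrib, Finset.prod_const, Finset.prod_pow_eq_pow_sum]
          simp [Finset.card_univ]
      _ ≤ c ^ (r + s) * (ν : ℝ) ^ (r + s + s - 2) := by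
          refine mul_le_mul_of_nonneg_left ?_ (pow_nonneg hc0.le _)
          exact pow_le_pow_right₀ hν1 (eexp_sum r s hs hsr j)
  -- put everything together
  calc (S.ncard : ℝ) ≤ (T.card : ℝ) := by exact_mod_cast hcard1
    _ = ∑ j ∈ Finset.range (s + 1), ((Fintype.piFinset (G j)).card : ℝ) := by
        rw [hTdef, Finset.card_sigma]
        push_cast
        rfl
    _ ≤ ∑ j ∈ Finset.range (s + 1), c ^ (r + s) * (ν : ℝ) ^ (r + s + s - 2) :=
        Finset.sum_le_sum hperj
    _ = ((s : ℝ) + 1) * c ^ (r + s) * (ν : ℝ) ^ (r + s + s - 2) := by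
        rw [Finset.sum_const, Finset.card_range, nsmul_eq_mul]
        push_cast
        ring
end

section
/- Let p be an odd prime, m ≥ 3 an integer, a_1, …, a_m integers none of which is divisible by p, u a nonzero squarefree integer, and k ≥ 0 an integer. For each positive integer e, let N_e be the number of tuples x ∈ (ℤ/p^eℤ)^m satisfying Σ_{i=1}^m a_i·x_i² = p^{2k}·u in ℤ/p^eℤ. Then the sequence N_e / p^{(m−1)e} converges as e → ∞, and its limit is at least (1 − 2·p^{1−m/2}) / (1 − p^{1−m/2}). -/
open Filter

set_option linter.unusedSectionVars false
set_option linter.unusedVariables false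
set_option maxHeartbeats 1000000

section Aux
open Finset
namespace NLaux

section Gmach
variable (A B : ℕ)

/-- lift-multiply map `ZMod B → ZMod (A*B)`, `z ↦ A * z̃`. -/
def mu (z : ZMod B) : ZMod (A * B) := ((A * z.val : ℕ) : ZMod (A * B))

/-- "divide by A" map. -/
def nu (d : ZMod (A * B)) : ZMod B := ((d.val / A : ℕ) : ZMod B)

variable [NeZero A] [NeZero B]

lemma G0 (n : ℕ) : ((A * n : ℕ) : ZMod (A * B)) = mu A B ((n : ZMod B)) := by
  unfold mu
  rw [ZMod.natCast_eq_natCast_iff, ZMod.val_natCast]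
  exact Nat.ModEq.mul_left' A (Nat.mod_modEq n B).symm

lemma mu_val (z : ZMod B) : (mu A B z).val = A * z.val := by
  unfold mu
  exact ZMod.val_cast_of_lt (mul_lt_mul_of_pos_left z.val_lt (Nat.pos_of_ne_zero (NeZero.ne A)))

lemma nu_mu (z : ZMod B) : nu A B (mu A B z) = z := by
  unfold nu
  rw [mu_val, Nat.mul_div_cancel_left _ (Nat.pos_of_ne_zero (NeZero.ne A)), ZMod.natCast_zmod_val]

lemma mu_injective : Function.Injective (mu A B) :=
  Function.LeftInverse.injective (nu_mu A B)

lemma mu_zero : mu A B 0 = 0 := by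
  unfold mu; simp

lemma mu_nu (d : ZMod (A * B)) (h : A ∣ d.val) : mu A B (nu A B d) = d := by
  obtain ⟨s, hs⟩ := h
  have hsB : s < B := by
    have := d.val_lt
    rw [hs] at this
    exact lt_of_mul_lt_mul_left this (Nat.zero_le A)
  unfold nu
  rw [hs, Nat.mul_div_cancel_left _ (Nat.pos_of_ne_zero (NeZero.ne A))]
  have : ((s : ZMod B)).val = s := ZMod.val_cast_of_lt hsB
  unfold mu
  rw [this, ← hs, ZMod.natCast_zmod_val]

lemma mu_add (y z : ZMod B) : mu A B (y + z) = mu A B y + mu A B z := by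
  have h1 : mu A B y + mu A B z = ((A * (y.val + z.val) : ℕ) : ZMod (A * B)) := by
    unfold mu; push_cast; ring
  rw [h1, G0]
  congr 1
  push_cast [ZMod.natCast_zmod_val]
  rfl

lemma mul_mu (r : ZMod (A * B)) (z : ZMod B) :
    r * mu A B z = mu A B ((ZMod.castHom (dvd_mul_left B A) (ZMod B) r) * z) := by
  obtain ⟨n, rfl⟩ : ∃ n : ℕ, (n : ZMod (A * B)) = r := ⟨r.val, ZMod.natCast_zmod_val r⟩
  have h1 : (n : ZMod (A * B)) * mu A B z = ((A * (n * z.val) : ℕ) : ZMod (A * B)) := by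
    unfold mu; push_cast; ring
  rw [h1, G0]
  congr 1
  rw [map_natCast]
  push_cast [ZMod.natCast_zmod_val]
  ring

lemma mu_mul_mu (h : B ∣ A) (y z : ZMod B) : mu A B y * mu A B z = 0 := by
  have h1 : mu A B y * mu A B z = ((A * (y.val * A * z.val) : ℕ) : ZMod (A * B)) := by
    unfold mu; push_cast; ring
  rw [h1, G0]
  have : ((y.val * A * z.val : ℕ) : ZMod B) = 0 := by
    rw [ZMod.natCast_eq_zero_iff]
    exact Dvd.dvd.mul_right (Dvd.dvd.mul_left h y.val) z.val
  rw [this, mu_zero]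

lemma pi_mu (z : ZMod B) :
    ZMod.castHom (dvd_mul_right A B) (ZMod A) (mu A B z) = 0 := by
  unfold mu
  rw [map_natCast]
  push_cast
  simp [ZMod.natCast_self]

lemma pi_eq_zero_iff (d : ZMod (A * B)) :
    ZMod.castHom (dvd_mul_right A B) (ZMod A) d = 0 ↔ A ∣ d.val := by
  rw [ZMod.castHom_apply, ← ZMod.natCast_val, ZMod.natCast_eq_zero_iff]

/-- master: multiplication by `A` factors through reduction mod `B`. -/
lemma G10 (y : ZMod (A * B)) :
    (A : ZMod (A * B)) * y = mu A B (ZMod.castHom (dvd_mul_left B A) (ZMod B) y) := by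
  obtain ⟨n, rfl⟩ : ∃ n : ℕ, (n : ZMod (A * B)) = y := ⟨y.val, ZMod.natCast_zmod_val y⟩
  rw [← Nat.cast_mul, G0, map_natCast]

lemma cancelA (y z : ZMod (A * B)) :
    (A : ZMod (A * B)) * y = (A : ZMod (A * B)) * z ↔
      ZMod.castHom (dvd_mul_left B A) (ZMod B) y
        = ZMod.castHom (dvd_mul_left B A) (ZMod B) z := by
  rw [G10, G10]
  exact ⟨fun h => mu_injective A B h, fun h => by rw [h]⟩

end Gmach

section PartA
variable (p : ℕ) [Fact p.Prime]

/-- number of solutions of `∑_{i<m} b i * x i ^ 2 = c` over `ZMod p`. -/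
def Scnt (b : ℕ → ZMod p) (m : ℕ) (c : ZMod p) : ℕ :=
  (univ.filter fun x : Fin m → ZMod p => ∑ i, b i.1 * x i ^ 2 = c).card

/-- twisted count. -/
def Tsum (b : ℕ → ZMod p) (m : ℕ) (c : ZMod p) : ℤ :=
  ∑ s : ZMod p, (quadraticChar (ZMod p) s) * (Scnt p b m (c - s) : ℤ)

def Ksum (w : ZMod p) : ℤ :=
  ∑ s : ZMod p, (quadraticChar (ZMod p) s) * (quadraticChar (ZMod p) (w - s))

lemma ringChar_ne_two (hp2 : p ≠ 2) : ringChar (ZMod p) ≠ 2 := by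
  rw [ZMod.ringChar_zmod_n]; exact hp2

lemma chi_abs {b : ZMod p} (hb : b ≠ 0) : |quadraticChar (ZMod p) b| = 1 := by
  rcases quadraticChar_dichotomy hb with h | h <;> rw [h] <;> norm_num

lemma chi_inv {b : ZMod p} (hb : b ≠ 0) :
    quadraticChar (ZMod p) b⁻¹ = quadraticChar (ZMod p) b := by
  have h1 : quadraticChar (ZMod p) b * quadraticChar (ZMod p) b⁻¹ = 1 := by
    rw [← map_mul, mul_inv_cancel₀ hb, map_one]
  rcases quadraticChar_dichotomy hb with h | h <;> rw [h] at h1 ⊢ <;> linarith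

lemma Scnt_total (b : ℕ → ZMod p) (m : ℕ) : ∑ c : ZMod p, Scnt p b m c = p ^ m := by
  classical
  have h := Finset.card_eq_sum_card_fiberwise
    (s := (univ : Finset (Fin m → ZMod p))) (t := univ)
    (f := fun x => ∑ i, b i.1 * x i ^ 2) (fun x _ => mem_univ _)
  unfold Scnt
  rw [← h, Finset.card_univ, Fintype.card_fun, ZMod.card, Fintype.card_fin]

lemma Scnt_succ (b : ℕ → ZMod p) (m : ℕ) (c : ZMod p) :
    Scnt p b (m + 1) c = ∑ y : ZMod p, Scnt p (fun i => b (i + 1)) m (c - b 0 * y ^ 2) := by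
  classical
  unfold Scnt
  rw [Finset.card_eq_sum_card_fiberwise
    (f := fun x : Fin (m+1) → ZMod p => x 0) (t := univ) (fun x _ => mem_univ _)]
  refine Finset.sum_congr rfl fun y _ => ?_
  rw [Finset.filter_filter]
  refine Finset.card_bij' (fun x _ => Fin.tail x) (fun x' _ => Fin.cons y x') ?_ ?_ ?_ ?_
  · intro x hx
    simp only [mem_filter, mem_univ, true_and] at hx ⊢
    obtain ⟨h1, h2⟩ := hx
    rw [Fin.sum_univ_succ] at h1
    simp only [Fin.val_zero, Fin.val_succ] at h1
    rw [eq_sub_iff_add_eq, ← h2]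
    rw [← h1]
    simp only [Fin.tail]
    ring
  · intro x' hx'
    simp only [mem_filter, mem_univ, true_and] at hx' ⊢
    constructor
    · rw [Fin.sum_univ_succ]
      simp only [Fin.cons_zero, Fin.cons_succ, Fin.val_succ, Fin.val_zero]
      rw [show (∑ i : Fin m, b (i.1 + 1) * x' i ^ 2) = c - b 0 * y ^ 2 from hx']
      ring
    · simp
  · intro x hx
    have h2 : x 0 = y := ((Finset.mem_filter.mp hx).2).2
    funext i
    refine Fin.cases ?_ ?_ i
    · simpa using h2.symm
    · intro j; simp [Fin.tail]
  · intro x' _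
    funext i
    simp [Fin.tail]

lemma sum_by_fiber (f : ZMod p → ℤ) (g : ZMod p → ZMod p) :
    ∑ y : ZMod p, f (g y)
      = ∑ s : ZMod p, ((univ.filter fun y => g y = s).card : ℤ) * f s := by
  classical
  rw [← Finset.sum_fiberwise_of_maps_to (g := g) (t := univ) (fun x _ => mem_univ _)
      (f := fun y => f (g y))]
  refine Finset.sum_congr rfl fun s _ => ?_
  rw [Finset.sum_congr rfl (fun y hy => by rw [(Finset.mem_filter.mp hy).2]),
    Finset.sum_const, nsmul_eq_mul]

lemma card_sq_eq (hp2 : p ≠ 2) (d : ZMod p) :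
    ((univ.filter fun y : ZMod p => y ^ 2 = d).card : ℤ)
      = quadraticChar (ZMod p) d + 1 := by
  classical
  have h := quadraticChar_card_sqrts (ringChar_ne_two p hp2) d
  rw [Set.toFinset_setOf] at h
  exact_mod_cast h

lemma card_mulsq_eq (hp2 : p ≠ 2) {b0 : ZMod p} (hb0 : b0 ≠ 0) (s : ZMod p) :
    ((univ.filter fun y : ZMod p => b0 * y ^ 2 = s).card : ℤ)
      = quadraticChar (ZMod p) b0 * quadraticChar (ZMod p) s + 1 := by
  classical
  have hcond : ∀ y : ZMod p, (b0 * y ^ 2 = s) ↔ (y ^ 2 = b0⁻¹ * s) := by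
    intro y
    constructor
    · intro h; rw [← h]; field_simp
    · intro h; rw [h]; field_simp
  rw [show (univ.filter fun y : ZMod p => b0 * y ^ 2 = s)
      = (univ.filter fun y : ZMod p => y ^ 2 = b0⁻¹ * s) from
    Finset.filter_congr (fun y _ => by rw [hcond y])]
  rw [card_sq_eq p hp2, map_mul, chi_inv p hb0]

lemma Ksum_zero (hp2 : p ≠ 2) : Ksum p 0 = quadraticChar (ZMod p) (-1) * ((p : ℤ) - 1) := by
  classical
  unfold Ksum
  have h1 : ∀ s : ZMod p,
      quadraticChar (ZMod p) s * quadraticChar (ZMod p) (0 - s)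
        = quadraticChar (ZMod p) (-1) * (quadraticChar (ZMod p) s)^2 := by
    intro s
    rw [zero_sub, show (-s : ZMod p) = -1 * s by ring, map_mul]
    ring
  rw [Finset.sum_congr rfl fun s _ => h1 s, ← Finset.mul_sum]
  congr 1
  rw [← Finset.sum_erase_add _ _ (mem_univ (0 : ZMod p))]
  rw [Finset.sum_congr rfl (fun s hs => quadraticChar_sq_one (Finset.ne_of_mem_erase hs))]
  simp only [Finset.sum_const, nsmul_eq_mul, mul_one]
  rw [Finset.card_erase_of_mem (mem_univ _), Finset.card_univ, ZMod.card]
  have hp1 : 1 ≤ p := (Fact.out : p.Prime).one_lt.le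
  rw [quadraticChar_zero]
  push_cast [Nat.cast_sub hp1]
  ring

lemma Ksum_ne_zero (hp2 : p ≠ 2) {w : ZMod p} (hw : w ≠ 0) :
    Ksum p w = -quadraticChar (ZMod p) (-1) := by
  classical
  unfold Ksum
  rw [← Finset.sum_erase_add _ _ (mem_univ (0 : ZMod p)), quadraticChar_zero, zero_mul, add_zero]
  have h1 : ∀ s ∈ univ.erase (0 : ZMod p),
      quadraticChar (ZMod p) s * quadraticChar (ZMod p) (w - s)
        = quadraticChar (ZMod p) (w * s⁻¹ - 1) := by
    intro s hs
    have hs0 : s ≠ 0 := Finset.ne_of_mem_erase hs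
    have : w - s = s * (w * s⁻¹ - 1) := by
      field_simp
    rw [this, map_mul, ← mul_assoc, ← sq, quadraticChar_sq_one hs0, one_mul]
  rw [Finset.sum_congr rfl h1]
  have h2 : ∑ s ∈ univ.erase (0 : ZMod p), quadraticChar (ZMod p) (w * s⁻¹ - 1)
      = ∑ v ∈ univ.erase (0 : ZMod p), quadraticChar (ZMod p) (v - 1) := by
    refine Finset.sum_bij' (fun s _ => w * s⁻¹) (fun v _ => w * v⁻¹) ?_ ?_ ?_ ?_ ?_
    · intro s hs
      have hs0 : s ≠ 0 := Finset.ne_of_mem_erase hs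
      exact Finset.mem_erase.mpr ⟨mul_ne_zero hw (inv_ne_zero hs0), mem_univ _⟩
    · intro v hv
      have hv0 : v ≠ 0 := Finset.ne_of_mem_erase hv
      exact Finset.mem_erase.mpr ⟨mul_ne_zero hw (inv_ne_zero hv0), mem_univ _⟩
    · intro s hs
      have hs0 : s ≠ 0 := Finset.ne_of_mem_erase hs
      field_simp
    · intro v hv
      have hv0 : v ≠ 0 := Finset.ne_of_mem_erase hv
      field_simp
    · intro s hs; rfl
  rw [h2]
  have h3 : ∑ v ∈ (univ : Finset (ZMod p)).erase 0, quadraticChar (ZMod p) (v - 1)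
      = (∑ v : ZMod p, quadraticChar (ZMod p) (v - 1)) - quadraticChar (ZMod p) (0 - 1) := by
    rw [← Finset.sum_erase_add _ _ (mem_univ (0 : ZMod p))]
    ring
  rw [h3]
  have h4 : ∑ v : ZMod p, quadraticChar (ZMod p) (v - 1)
      = ∑ t : ZMod p, quadraticChar (ZMod p) t := by
    exact Fintype.sum_equiv (Equiv.subRight (1 : ZMod p)) _ _ (fun v => rfl)
  rw [h4, quadraticChar_sum_zero (ringChar_ne_two p hp2)]
  rw [zero_sub]
  ring

lemma Scnt_eq (hp2 : p ≠ 2) (b : ℕ → ZMod p) (hb0 : b 0 ≠ 0) (m : ℕ) (c : ZMod p) :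
    (Scnt p b (m + 1) c : ℤ)
      = (p : ℤ) ^ m + quadraticChar (ZMod p) (b 0) * Tsum p (fun i => b (i + 1)) m c := by
  classical
  rw [Scnt_succ]
  push_cast
  rw [sum_by_fiber p (fun s => (Scnt p (fun i => b (i + 1)) m (c - s) : ℤ))
      (fun y => b 0 * y ^ 2)]
  rw [Finset.sum_congr rfl (fun s _ => by rw [card_mulsq_eq p hp2 hb0 s])]
  have expand : ∀ s : ZMod p,
      (quadraticChar (ZMod p) (b 0) * quadraticChar (ZMod p) s + 1)
          * (Scnt p (fun i => b (i + 1)) m (c - s) : ℤ)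
        = quadraticChar (ZMod p) (b 0)
            * (quadraticChar (ZMod p) s * (Scnt p (fun i => b (i + 1)) m (c - s) : ℤ))
          + (Scnt p (fun i => b (i + 1)) m (c - s) : ℤ) := by
    intro s; ring
  rw [Finset.sum_congr rfl (fun s _ => expand s), Finset.sum_add_distrib, ← Finset.mul_sum]
  have htot : ∑ s : ZMod p, (Scnt p (fun i => b (i + 1)) m (c - s) : ℤ) = (p : ℤ) ^ m := by
    have h1 : ∑ s : ZMod p, (Scnt p (fun i => b (i + 1)) m (c - s) : ℤ)
        = ∑ d : ZMod p, (Scnt p (fun i => b (i + 1)) m d : ℤ) :=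
      Fintype.sum_equiv (Equiv.subLeft c) _ _ (fun s => rfl)
    rw [h1, ← Nat.cast_sum, Scnt_total]
    push_cast; ring
  rw [htot]
  unfold Tsum
  ring

lemma Tsum_base (hp2 : p ≠ 2) (b : ℕ → ZMod p) (hb0 : b 0 ≠ 0) (m : ℕ) (c : ZMod p) :
    Tsum p b (m + 1) c
      = quadraticChar (ZMod p) (b 0)
          * ∑ s : ZMod p, quadraticChar (ZMod p) s * Tsum p (fun i => b (i + 1)) m (c - s) := by
  classical
  unfold Tsum
  rw [Finset.sum_congr rfl (fun s (_ : s ∈ univ) => by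
    rw [Scnt_eq p hp2 b hb0 m (c - s)])]
  have expand : ∀ s : ZMod p,
      quadraticChar (ZMod p) s
          * ((p : ℤ) ^ m + quadraticChar (ZMod p) (b 0) * Tsum p (fun i => b (i + 1)) m (c - s))
        = (p : ℤ) ^ m * quadraticChar (ZMod p) s
          + quadraticChar (ZMod p) (b 0)
              * (quadraticChar (ZMod p) s * Tsum p (fun i => b (i + 1)) m (c - s)) := by
    intro s; ring
  rw [Finset.sum_congr rfl (fun s _ => expand s), Finset.sum_add_distrib,
    ← Finset.mul_sum, ← Finset.mul_sum, quadraticChar_sum_zero (ringChar_ne_two p hp2),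
    mul_zero, zero_add]
  rfl

lemma chiT_eq (hp2 : p ≠ 2) (b : ℕ → ZMod p) (m : ℕ) (c : ZMod p) :
    ∑ s : ZMod p, quadraticChar (ZMod p) s * Tsum p b m (c - s)
      = quadraticChar (ZMod p) (-1) * ((p : ℤ) * (Scnt p b m c : ℤ) - (p : ℤ) ^ m) := by
  classical
  unfold Tsum
  -- double sum
  have h1 : ∑ s : ZMod p, quadraticChar (ZMod p) s
        * ∑ r : ZMod p, quadraticChar (ZMod p) r * (Scnt p b m (c - s - r) : ℤ)
      = ∑ s : ZMod p, ∑ w : ZMod p, quadraticChar (ZMod p) s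
          * (quadraticChar (ZMod p) (w - s) * (Scnt p b m (c - w) : ℤ)) := by
    refine Finset.sum_congr rfl fun s _ => ?_
    rw [Finset.mul_sum]
    refine Fintype.sum_equiv (Equiv.addRight s) _ _ fun w => ?_
    simp only [Equiv.coe_addRight]
    have h1 : w + s - s = w := by ring
    have h2 : c - (w + s) = c - s - w := by ring
    rw [h1, h2]
  rw [h1, Finset.sum_comm]
  have h2 : ∀ w : ZMod p, ∑ s : ZMod p, quadraticChar (ZMod p) s
        * (quadraticChar (ZMod p) (w - s) * (Scnt p b m (c - w) : ℤ))
      = Ksum p w * (Scnt p b m (c - w) : ℤ) := by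
    intro w
    unfold Ksum
    rw [Finset.sum_mul]
    exact Finset.sum_congr rfl fun s _ => by ring
  rw [Finset.sum_congr rfl (fun w _ => h2 w)]
  rw [← Finset.sum_erase_add _ _ (mem_univ (0 : ZMod p))]
  rw [Finset.sum_congr rfl (fun w hw => by
    rw [Ksum_ne_zero p hp2 (Finset.ne_of_mem_erase hw)])]
  have h3 : ∑ w ∈ univ.erase (0 : ZMod p),
        -quadraticChar (ZMod p) (-1) * (Scnt p b m (c - w) : ℤ)
      = -quadraticChar (ZMod p) (-1)
          * ((p : ℤ) ^ m - (Scnt p b m c : ℤ)) := by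
    rw [← Finset.mul_sum]
    congr 1
    have h4 : ∑ w ∈ univ.erase (0 : ZMod p), (Scnt p b m (c - w) : ℤ)
        = (∑ w : ZMod p, (Scnt p b m (c - w) : ℤ)) - (Scnt p b m (c - 0) : ℤ) := by
      rw [← Finset.sum_erase_add _ _ (mem_univ (0 : ZMod p))]
      ring
    have h5 : ∑ w : ZMod p, (Scnt p b m (c - w) : ℤ) = (p : ℤ) ^ m := by
      have := Fintype.sum_equiv (Equiv.subLeft c)
        (fun w => (Scnt p b m (c - w) : ℤ)) (fun d => (Scnt p b m d : ℤ)) (fun w => rfl)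
      rw [this, ← Nat.cast_sum, Scnt_total]; push_cast; ring
    rw [h4, h5, sub_zero]
  rw [h3, Ksum_zero p hp2, sub_zero]
  ring

lemma Tsum_eq (hp2 : p ≠ 2) (b : ℕ → ZMod p) (hb0 : b 0 ≠ 0) (m : ℕ) (c : ZMod p) :
    Tsum p b (m + 1) c
      = quadraticChar (ZMod p) (b 0) * quadraticChar (ZMod p) (-1)
          * ((p : ℤ) * (Scnt p (fun i => b (i + 1)) m c : ℤ) - (p : ℤ) ^ m) := by
  rw [Tsum_base p hp2 b hb0 m c, chiT_eq p hp2]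
  ring

lemma Scnt_zero_vars (b : ℕ → ZMod p) (d : ZMod p) :
    Scnt p b 0 d = if d = 0 then 1 else 0 := by
  classical
  unfold Scnt
  have h : ∀ x : Fin 0 → ZMod p, (∑ i : Fin 0, b i.1 * x i ^ 2) = 0 := by
    intro x; simp
  by_cases hd : d = 0
  · rw [hd, if_pos rfl]
    rw [Finset.filter_true_of_mem (fun x _ => h x)]
    rw [Finset.card_univ]
    simp [Fintype.card_fun]
  · rw [if_neg hd]
    rw [Finset.filter_false_of_mem (fun x _ => by rw [h x]; exact fun hc => hd hc.symm)]
    simp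

lemma Tsum_zero_vars (b : ℕ → ZMod p) (c : ZMod p) :
    Tsum p b 0 c = quadraticChar (ZMod p) c := by
  classical
  unfold Tsum
  rw [Finset.sum_eq_single c]
  · rw [Scnt_zero_vars, sub_self, if_pos rfl]
    simp
  · intro s _ hs
    rw [Scnt_zero_vars, if_neg (fun h => hs (sub_eq_zero.mp h).symm)]
    simp
  · intro h; exact absurd (mem_univ c) h

/-- the bound `B_n`. -/
def Bnd (n : ℕ) : ℤ :=
  if n % 2 = 1 then (p : ℤ) ^ ((n - 1) / 2) else ((p : ℤ) - 1) * (p : ℤ) ^ (n / 2 - 1)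

lemma Bnd_one : Bnd p 1 = 1 := by unfold Bnd; norm_num

lemma Bnd_two : Bnd p 2 = (p : ℤ) - 1 := by unfold Bnd; norm_num

lemma Bnd_step (n : ℕ) (hn : 1 ≤ n) : Bnd p (n + 2) = (p : ℤ) * Bnd p n := by
  unfold Bnd
  rcases Nat.even_or_odd n with he | ho
  · have h2 : n % 2 = 0 := Nat.even_iff.mp he
    have h3 : (n + 2) % 2 = 0 := by omega
    rw [if_neg (by omega), if_neg (by omega)]
    have h4 : (n + 2) / 2 - 1 = (n / 2 - 1) + 1 := by omega
    rw [h4, pow_succ]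
    ring
  · have h2 : n % 2 = 1 := Nat.odd_iff.mp ho
    rw [if_pos (by omega), if_pos (by omega)]
    have h4 : (n + 2 - 1) / 2 = ((n - 1) / 2) + 1 := by omega
    rw [h4, pow_succ]
    ring

lemma chi_abs_le (c : ZMod p) : |quadraticChar (ZMod p) c| ≤ 1 := by
  by_cases hc : c = 0
  · rw [hc, quadraticChar_zero]; norm_num
  · rw [chi_abs p hc]

lemma partA (hp2 : p ≠ 2) : ∀ m, 1 ≤ m → ∀ b : ℕ → ZMod p, (∀ i, b i ≠ 0) → ∀ c,
    |(Scnt p b m c : ℤ) - (p : ℤ) ^ (m - 1)| ≤ Bnd p m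
      ∧ |Tsum p b m c| ≤ Bnd p (m + 1) := by
  have hp1 : (2 : ℤ) ≤ (p : ℤ) := by exact_mod_cast (Fact.out : p.Prime).two_le
  refine Nat.le_induction ?_ ?_
  · intro b hb c
    constructor
    · rw [Scnt_eq p hp2 b (hb 0) 0 c, Tsum_zero_vars]
      simp only [pow_zero, Nat.sub_self]
      rw [show (1:ℤ) + quadraticChar (ZMod p) (b 0) * quadraticChar (ZMod p) c - 1
          = quadraticChar (ZMod p) (b 0) * quadraticChar (ZMod p) c by ring]
      rw [Bnd_one, abs_mul, chi_abs p (hb 0), one_mul]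
      exact chi_abs_le p c
    · rw [Tsum_eq p hp2 b (hb 0) 0 c, Bnd_two]
      rw [abs_mul, abs_mul, chi_abs p (hb 0), chi_abs p (by
        intro h
        have : (1 : ZMod p) ≠ 0 := one_ne_zero
        rw [neg_eq_zero] at h
        exact this h), one_mul, one_mul]
      rw [Scnt_zero_vars]
      by_cases hc : c = 0
      · rw [if_pos hc]
        rw [show (p:ℤ) * ((1:ℕ):ℤ) - (p:ℤ)^0 = (p:ℤ) - 1 by push_cast; ring]
        rw [abs_of_nonneg (by linarith)]
      · rw [if_neg hc]
        rw [show (p:ℤ) * ((0:ℕ):ℤ) - (p:ℤ)^0 = -1 by push_cast; ring]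
        rw [abs_neg, abs_one]
        linarith
  · intro m hm IH b hb c
    have IH' := IH (fun i => b (i + 1)) (fun i => hb (i + 1))
    constructor
    · rw [Scnt_eq p hp2 b (hb 0) m c]
      rw [show m + 1 - 1 = m from rfl]
      rw [show (p:ℤ)^m + quadraticChar (ZMod p) (b 0) * Tsum p (fun i => b (i + 1)) m c
          - (p:ℤ)^m = quadraticChar (ZMod p) (b 0) * Tsum p (fun i => b (i + 1)) m c by ring]
      rw [abs_mul, chi_abs p (hb 0), one_mul]
      exact (IH' c).2
    · rw [Tsum_eq p hp2 b (hb 0) m c]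
      rw [abs_mul, abs_mul, chi_abs p (hb 0), chi_abs p (by
        intro h
        have : (1 : ZMod p) ≠ 0 := one_ne_zero
        rw [neg_eq_zero] at h
        exact this h), one_mul, one_mul]
      have hmm : m - 1 + 1 = m := by omega
      rw [show (p:ℤ) * (Scnt p (fun i => b (i+1)) m c : ℤ) - (p:ℤ)^m
          = (p:ℤ) * ((Scnt p (fun i => b (i+1)) m c : ℤ) - (p:ℤ)^(m-1)) by
        rw [mul_sub, ← pow_succ']
        rw [hmm]]
      rw [abs_mul, abs_of_nonneg (by linarith : (0:ℤ) ≤ (p:ℤ))]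
      rw [Bnd_step p m hm]
      have := (IH' c).1
      have hB : 0 ≤ (p : ℤ) := by linarith
      exact mul_le_mul_of_nonneg_left this hB

end PartA


section punit
variable (p : ℕ) [Fact p.Prime]

lemma unit_iff_gen (N E : ℕ) (hE : 1 ≤ E) (h : N = p ^ E) (x : ZMod N) :
    IsUnit x ↔ ¬ p ∣ x.val := by
  subst h
  haveI : NeZero (p ^ E) := ⟨pow_ne_zero _ (Fact.out : p.Prime).ne_zero⟩
  conv_lhs => rw [← ZMod.natCast_zmod_val x]
  rw [ZMod.isUnit_iff_coprime, Nat.coprime_pow_right_iff (by omega), Nat.coprime_comm]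
  exact (Fact.out : p.Prime).coprime_iff_not_dvd

lemma card_fixed_coord (m : ℕ) (i₀ : Fin m) (w : ZMod p) :
    (univ.filter fun s : Fin m → ZMod p => s i₀ = w).card = p ^ (m - 1) := by
  classical
  rw [show ((univ.filter fun s : Fin m → ZMod p => s i₀ = w).card)
      = (univ : Finset ({j : Fin m // j ≠ i₀} → ZMod p)).card from ?_]
  · rw [Finset.card_univ, Fintype.card_fun, ZMod.card, Fintype.card_subtype_compl,
      Fintype.card_subtype_eq, Fintype.card_fin]
  · refine Finset.card_bij' (fun s _ => fun j => s j.1)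
      (fun g _ => fun j => if h : j = i₀ then w else g ⟨j, h⟩)
      (fun s hs => mem_univ _) ?_ ?_ ?_
    · intro g _
      simp only [mem_filter, mem_univ, true_and]
      simp
    · intro s hs
      have hw : s i₀ = w := (Finset.mem_filter.mp hs).2
      funext j
      rcases eq_or_ne j i₀ with rfl | hj
      · simp [hw]
      · simp [hj]
    · intro g _
      funext j
      simp [j.2]

/-- number of solutions of a nontrivial linear equation over `ZMod p`. -/
lemma linear_count (m : ℕ) (c : Fin m → ZMod p) (i₀ : Fin m) (hc : c i₀ ≠ 0) (w : ZMod p) :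
    (univ.filter fun t : Fin m → ZMod p => ∑ i, c i * t i = w).card = p ^ (m - 1) := by
  classical
  have hupd : ∀ (t : Fin m → ZMod p) (v : ZMod p),
      ∑ i, c i * (Function.update t i₀ v) i = (∑ i, c i * t i) + c i₀ * (v - t i₀) := by
    intro t v
    have hfun : (fun i => c i * (Function.update t i₀ v) i)
        = Function.update (fun i => c i * t i) i₀ (c i₀ * v) := by
      funext j
      rcases eq_or_ne j i₀ with rfl | hj
      · simp
      · simp [Function.update_apply, hj]
    rw [hfun, Finset.sum_update_of_mem (mem_univ i₀),
      Finset.sum_eq_sum_sdiff_singleton_add (mem_univ i₀) (fun i => c i * t i)]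
    ring
  rw [← card_fixed_coord p m i₀ w]
  refine Finset.card_bij'
    (fun t _ => Function.update t i₀ (∑ i, c i * t i))
    (fun s _ => Function.update s i₀ ((s i₀ - ∑ i, c i * s i + c i₀ * s i₀) * (c i₀)⁻¹))
    ?_ ?_ ?_ ?_
  · intro t ht
    have h1 : ∑ i, c i * t i = w := (Finset.mem_filter.mp ht).2
    simp only [mem_filter, mem_univ, true_and]
    simp [h1]
  · intro s hs
    have h1 : s i₀ = w := (Finset.mem_filter.mp hs).2
    simp only [mem_filter, mem_univ, true_and]
    rw [hupd]
    have hXc : c i₀ * ((s i₀ - ∑ i, c i * s i + c i₀ * s i₀) * (c i₀)⁻¹ - s i₀)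
        = s i₀ - ∑ i, c i * s i := by
      field_simp
      ring
    rw [hXc]
    linear_combination h1
  · intro t ht
    have h1 : ∑ i, c i * t i = w := (Finset.mem_filter.mp ht).2
    funext j
    rcases eq_or_ne j i₀ with rfl | hj
    · rw [Function.update_self, hupd, Function.update_self]
      field_simp
      ring
    · simp [Function.update_apply, hj]
  · intro s hs
    have h1 : s i₀ = w := (Finset.mem_filter.mp hs).2
    funext j
    rcases eq_or_ne j i₀ with rfl | hj
    · rw [Function.update_self, hupd]
      have hXc : c j * ((s j - ∑ i, c i * s i + c j * s j) * (c j)⁻¹ - s j)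
          = s j - ∑ i, c i * s i := by
        field_simp
        ring
      rw [hXc]
      ring
    · simp [Function.update_apply, hj]

end punit

section helpers
variable (B : ℕ) [NeZero B]

lemma mu_sum (A : ℕ) [NeZero A] {ι : Type*} (s : Finset ι) (f : ι → ZMod B) :
    mu A B (∑ i ∈ s, f i) = ∑ i ∈ s, mu A B (f i) :=
  map_sum (AddMonoidHom.mk' (mu A B) (mu_add A B)) f s

lemma mu_eq_mul (A : ℕ) [NeZero A] (z : ZMod B) :
    mu A B z = (A : ZMod (A * B)) * ((z.val : ℕ) : ZMod (A * B)) := by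
  unfold mu; push_cast; ring

lemma cast_eq_zero_iff (n : ℕ) [NeZero n] (h : B ∣ n) (d : ZMod n) :
    ZMod.castHom h (ZMod B) d = 0 ↔ B ∣ d.val := by
  rw [ZMod.castHom_apply, ← ZMod.natCast_val, ZMod.natCast_eq_zero_iff]

lemma cast_eq_val_cast (n : ℕ) [NeZero n] (h : B ∣ n) (d : ZMod n) :
    ZMod.castHom h (ZMod B) d = ((d.val : ℕ) : ZMod B) := by
  rw [ZMod.castHom_apply, ← ZMod.natCast_val]

lemma cancel_gen (A N : ℕ) [NeZero N] (h : N = A * B) (hdvd : B ∣ N) (y z : ZMod N) :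
    (A : ZMod N) * y = (A : ZMod N) * z ↔
      ZMod.castHom hdvd (ZMod B) y = ZMod.castHom hdvd (ZMod B) z := by
  subst h
  haveI : NeZero A := ⟨fun hA => (NeZero.ne (A * B)) (by rw [hA, zero_mul])⟩
  exact cancelA A B y z

end helpers

section PartB
variable (p : ℕ) [Fact p.Prime]

lemma cast_mu_zero (A : ℕ) [NeZero A] [NeZero p] (hA : p ∣ A) (h : p ∣ A * p) (z : ZMod p) :
    ZMod.castHom h (ZMod p) (mu A p z) = 0 := by
  rw [cast_eq_zero_iff, mu_val]
  exact Dvd.dvd.mul_right hA z.val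

lemma fiber_count (A : ℕ) [NeZero A] (m : ℕ) (z : Fin m → ZMod A) :
    (univ.filter fun y : Fin m → ZMod (A * p) =>
      (fun j => (((y j).val : ℕ) : ZMod A)) = z).card = p ^ m := by
  classical
  haveI : NeZero p := ⟨(Fact.out : p.Prime).ne_zero⟩
  have hcard : (univ : Finset (Fin m → ZMod p)).card = p ^ m := by
    rw [card_univ, Fintype.card_fun, ZMod.card, Fintype.card_fin]
  rw [← hcard]
  have hπΛ : ∀ w : ZMod A, ((( (((w.val : ℕ) : ZMod (A*p))).val : ℕ)) : ZMod A) = w := by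
    intro w
    rw [← cast_eq_val_cast A (A*p) (dvd_mul_right A p), map_natCast, ZMod.natCast_zmod_val]
  refine Finset.card_bij'
    (fun y _ => fun i => nu A p (y i - (((z i).val : ℕ) : ZMod (A * p))))
    (fun t _ => fun i => (((z i).val : ℕ) : ZMod (A * p)) + mu A p (t i))
    (fun y _ => mem_univ _) ?_ ?_ ?_
  · intro t _
    refine mem_filter.mpr ⟨mem_univ _, ?_⟩
    funext j
    rw [← cast_eq_val_cast A (A*p) (dvd_mul_right A p), map_add, pi_mu, add_zero,
      cast_eq_val_cast A (A*p) (dvd_mul_right A p), hπΛ]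
  · intro y hy
    have hred : (fun j => (((y j).val : ℕ) : ZMod A)) = z := (mem_filter.mp hy).2
    funext i
    have hz : A ∣ (y i - (((z i).val : ℕ) : ZMod (A * p))).val := by
      rw [← cast_eq_zero_iff A (A*p) (dvd_mul_right A p), map_sub,
        cast_eq_val_cast A (A*p) (dvd_mul_right A p), congrFun hred i,
        cast_eq_val_cast A (A*p) (dvd_mul_right A p), hπΛ, sub_self]
    dsimp only
    rw [mu_nu A p _ hz]
    ring
  · intro t _
    funext i
    dsimp only
    rw [add_sub_cancel_left, nu_mu]

noncomputable def cnt (m : ℕ) (a : Fin m → ℤ) (n : ℕ) (C : ℤ) : ℕ :=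
  Nat.card {x : Fin m → ZMod n // ∑ i, (a i : ZMod n) * x i ^ 2 = (C : ZMod n)}

noncomputable def pcnt (m : ℕ) (a : Fin m → ℤ) (n : ℕ) (C : ℤ) : ℕ :=
  Nat.card {x : Fin m → ZMod n //
    (∑ i, (a i : ZMod n) * x i ^ 2 = (C : ZMod n)) ∧ ∃ i, IsUnit (x i)}

noncomputable def zcnt (m : ℕ) (a : Fin m → ℤ) (n : ℕ) (C : ℤ) : ℕ :=
  Nat.card {x : Fin m → ZMod n //
    (∑ i, (a i : ZMod n) * x i ^ 2 = (C : ZMod n)) ∧ ∀ i, ¬ IsUnit (x i)}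

lemma ncard_eq_filter {α : Type*} [Fintype α] (P : α → Prop) [DecidablePred P] :
    Nat.card {x : α // P x} = (univ.filter P).card := by
  rw [Nat.card_eq_fintype_card, Fintype.card_subtype]

lemma prim_fiber (m : ℕ) (a : Fin m → ℤ) (ha : ∀ i, ¬ (p:ℤ) ∣ a i) (hp2 : p ≠ 2)
    (e : ℕ) (he : 1 ≤ e) (C : ℤ) (xb : Fin m → ZMod (p^e))
    (hsol : ∑ i, (a i : ZMod (p^e)) * xb i ^ 2 = (C : ZMod (p^e)))
    (hprim : ∃ i, IsUnit (xb i)) :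
    (univ.filter fun x : Fin m → ZMod (p^e * p) =>
        ((∑ i, (a i : ZMod (p^e * p)) * x i ^ 2 = (C : ZMod (p^e * p)))
          ∧ ∃ i, IsUnit (x i))
        ∧ (fun j => ZMod.castHom (dvd_mul_right (p^e) p) (ZMod (p^e)) (x j)) = xb).card
      = p ^ (m - 1) := by
  classical
  haveI : NeZero p := ⟨(Fact.out : p.Prime).ne_zero⟩
  haveI : NeZero (p^e) := ⟨pow_ne_zero _ (Fact.out : p.Prime).ne_zero⟩
  have hdvd : p ∣ p ^ e := dvd_pow_self p (by omega)
  set Λx : Fin m → ZMod (p^e * p) := fun i => (((xb i).val : ℕ) : ZMod (p^e * p)) with hΛx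
  have hπΛ : ∀ i, ZMod.castHom (dvd_mul_right (p^e) p) (ZMod (p^e)) (Λx i) = xb i := by
    intro i
    rw [hΛx]
    exact (map_natCast _ _).trans (ZMod.natCast_zmod_val (xb i))
  set d : ZMod (p^e*p) := (C : ZMod (p^e*p)) - ∑ i, (a i : ZMod (p^e*p)) * Λx i ^ 2 with hd
  have hπd : ZMod.castHom (dvd_mul_right (p^e) p) (ZMod (p^e)) d = 0 := by
    rw [hd, map_sub, map_sum]
    have hterm : ∀ i : Fin m, ZMod.castHom (dvd_mul_right (p^e) p) (ZMod (p^e))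
        ((a i : ZMod (p^e*p)) * Λx i ^ 2) = (a i : ZMod (p^e)) * xb i ^ 2 := by
      intro i; rw [map_mul, map_pow, map_intCast, hπΛ]
    rw [Finset.sum_congr rfl fun i _ => hterm i, map_intCast, hsol, sub_self]
  have hdval : (p^e) ∣ d.val :=
    (cast_eq_zero_iff (p^e) (p^e*p) (dvd_mul_right _ _) d).mp hπd
  set w' : ZMod p := nu (p^e) p d with hw'
  have hmuw : mu (p^e) p w' = d := mu_nu _ _ d hdval
  obtain ⟨i₀, hi₀⟩ := hprim
  set cf : Fin m → ZMod p :=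
    fun i => ZMod.castHom (dvd_mul_left p (p^e)) (ZMod p)
      (2 * (a i : ZMod (p^e*p)) * Λx i) with hcf
  have hπ₁Λ : ∀ i, ZMod.castHom (dvd_mul_left p (p^e)) (ZMod p) (Λx i)
      = (((xb i).val : ℕ) : ZMod p) := by
    intro i
    rw [hΛx]
    exact map_natCast _ _
  have hvalne : (((xb i₀).val : ℕ) : ZMod p) ≠ 0 := by
    intro h
    exact ((unit_iff_gen p (p^e) e he rfl (xb i₀)).mp hi₀)
      ((ZMod.natCast_eq_zero_iff _ p).mp h)
  have hcf0 : cf i₀ ≠ 0 := by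
    rw [hcf]
    dsimp only
    rw [map_mul, map_mul, map_intCast, hπ₁Λ]
    refine mul_ne_zero (mul_ne_zero ?_ ?_) hvalne
    · intro h
      have h2 : ((2 : ℕ) : ZMod p) = 0 := by
        rw [show ZMod.castHom (dvd_mul_left p (p^e)) (ZMod p) (2 : ZMod (p^e*p))
            = (2 : ZMod p) from map_ofNat _ 2] at h
        exact_mod_cast h
      have := (ZMod.natCast_eq_zero_iff 2 p).mp h2
      exact hp2 ((Nat.prime_dvd_prime_iff_eq (Fact.out : p.Prime) Nat.prime_two).mp this)
    · intro h
      exact ha i₀ ((ZMod.intCast_zmod_eq_zero_iff_dvd _ p).mp h)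
  have expand : ∀ t : Fin m → ZMod p,
      ∑ i, (a i : ZMod (p^e*p)) * (Λx i + mu (p^e) p (t i)) ^ 2
        = (∑ i, (a i : ZMod (p^e*p)) * Λx i ^ 2) + mu (p^e) p (∑ i, cf i * t i) := by
    intro t
    rw [mu_sum, ← Finset.sum_add_distrib]
    refine Finset.sum_congr rfl fun i _ => ?_
    have h0 : mu (p^e) p (t i) * mu (p^e) p (t i) = 0 := mu_mul_mu _ _ hdvd _ _
    have h1 : (2 * (a i : ZMod (p^e*p)) * Λx i) * mu (p^e) p (t i)
        = mu (p^e) p (cf i * t i) := mul_mu _ _ _ _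
    calc (a i : ZMod (p^e*p)) * (Λx i + mu (p^e) p (t i)) ^ 2
        = (a i : ZMod (p^e*p)) * Λx i ^ 2
            + (2 * (a i : ZMod (p^e*p)) * Λx i) * mu (p^e) p (t i)
            + (a i : ZMod (p^e*p)) * (mu (p^e) p (t i) * mu (p^e) p (t i)) := by ring
      _ = (a i : ZMod (p^e*p)) * Λx i ^ 2 + mu (p^e) p (cf i * t i) := by
            rw [h0, mul_zero, add_zero, h1]
  have hback : ∀ x : Fin m → ZMod (p^e * p),
      ((fun j => ZMod.castHom (dvd_mul_right (p^e) p) (ZMod (p^e)) (x j)) = xb) →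
      ∀ i, mu (p^e) p (nu (p^e) p (x i - Λx i)) = x i - Λx i := by
    intro x hxred i
    apply mu_nu
    rw [← cast_eq_zero_iff (p^e) (p^e*p) (dvd_mul_right _ _), map_sub, hπΛ,
      congrFun hxred i, sub_self]
  rw [← linear_count p m cf i₀ hcf0 w']
  refine Finset.card_bij'
    (fun x _ => fun i => nu (p^e) p (x i - Λx i))
    (fun t _ => fun i => Λx i + mu (p^e) p (t i)) ?_ ?_ ?_ ?_
  · intro x hx
    obtain ⟨-, ⟨hxsol, -⟩, hxred⟩ := mem_filter.mp hx
    refine mem_filter.mpr ⟨mem_univ _, ?_⟩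
    have hsum : ∑ i, (a i : ZMod (p^e*p)) * (Λx i + mu (p^e) p (nu (p^e) p (x i - Λx i))) ^ 2
        = (C : ZMod (p^e*p)) := by
      rw [Finset.sum_congr rfl (fun i (_ : i ∈ univ) => by
        rw [hback x hxred i, add_sub_cancel])]
      exact hxsol
    rw [expand] at hsum
    have : mu (p^e) p (∑ i, cf i * nu (p^e) p (x i - Λx i)) = mu (p^e) p w' := by
      rw [hmuw, hd]
      linear_combination hsum
    exact mu_injective (p^e) p this
  · intro t ht
    have hLt : ∑ i, cf i * t i = w' := (mem_filter.mp ht).2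
    refine mem_filter.mpr ⟨mem_univ _, ⟨?_, ⟨i₀, ?_⟩⟩, ?_⟩
    · rw [expand, hLt, hmuw, hd]
      ring
    · rw [unit_iff_gen p (p^e*p) (e+1) (by omega) (pow_succ p e).symm]
      intro hpv
      have hzero : ZMod.castHom (dvd_mul_left p (p^e)) (ZMod p) (Λx i₀ + mu (p^e) p (t i₀)) = 0 := by
        rw [cast_eq_zero_iff]
        exact hpv
      rw [map_add, hπ₁Λ, cast_mu_zero p (p^e) hdvd, add_zero] at hzero
      exact hvalne hzero
    · funext j
      rw [map_add, pi_mu, add_zero, hπΛ]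
  · intro x hx
    obtain ⟨-, -, hxred⟩ := mem_filter.mp hx
    funext i
    dsimp only
    rw [hback x hxred i]
    ring
  · intro t _
    funext i
    dsimp only
    rw [add_sub_cancel_left, nu_mu]

lemma pcnt_step (m : ℕ) (a : Fin m → ℤ) (ha : ∀ i, ¬ (p:ℤ) ∣ a i) (hp2 : p ≠ 2)
    (e : ℕ) (he : 1 ≤ e) (C : ℤ) :
    pcnt m a (p^e * p) C = p ^ (m-1) * pcnt m a (p^e) C := by
  classical
  haveI : NeZero p := ⟨(Fact.out : p.Prime).ne_zero⟩
  haveI : NeZero (p^e) := ⟨pow_ne_zero _ (Fact.out : p.Prime).ne_zero⟩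
  haveI : NeZero (p^e * p) := ⟨Nat.mul_ne_zero (pow_ne_zero _ (Fact.out : p.Prime).ne_zero) (Fact.out : p.Prime).ne_zero⟩
  rw [pcnt, pcnt, ncard_eq_filter, ncard_eq_filter]
  rw [Finset.card_eq_sum_card_fiberwise
    (f := fun (x : Fin m → ZMod (p^e * p)) => fun j =>
      ZMod.castHom (dvd_mul_right (p^e) p) (ZMod (p^e)) (x j))
    (t := univ.filter fun xb : Fin m → ZMod (p^e) =>
      (∑ i, (a i : ZMod (p^e)) * xb i ^ 2 = (C : ZMod (p^e))) ∧ ∃ i, IsUnit (xb i)) ?_]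
  · rw [Finset.sum_congr rfl (fun xb hxb => ?_), Finset.sum_const, smul_eq_mul, mul_comm]
    obtain ⟨-, hxbsol, hxbprim⟩ := mem_filter.mp hxb
    rw [Finset.filter_filter]
    exact prim_fiber p m a ha hp2 e he C xb hxbsol hxbprim
  · intro x hx
    obtain ⟨-, hxsol, i, hi⟩ := mem_filter.mp hx
    refine mem_filter.mpr ⟨mem_univ _, ?_, ⟨i, hi.map _⟩⟩
    have hterm : ∀ j : Fin m, (a j : ZMod (p^e))
        * (ZMod.castHom (dvd_mul_right (p^e) p) (ZMod (p^e)) (x j)) ^ 2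
        = ZMod.castHom (dvd_mul_right (p^e) p) (ZMod (p^e)) ((a j : ZMod (p^e*p)) * x j ^ 2) := by
      intro j; rw [map_mul, map_pow, map_intCast]
    rw [Finset.sum_congr rfl fun j _ => hterm j, ← map_sum, hxsol, map_intCast]

end PartB

section PartB2
variable (p : ℕ) [Fact p.Prime]

lemma hQ_mu (m : ℕ) (a : Fin m → ℤ) (d : ℕ) [NeZero (p^d * p)] [NeZero p]
    (y : Fin m → ZMod (p^d * p)) :
    ∑ i, (a i : ZMod (p * (p^d * p))) * (mu p (p^d * p) (y i)) ^ 2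
      = ((p : ZMod (p * (p^d * p)))) ^ 2
          * ∑ i, (a i : ZMod (p * (p^d * p))) * (((y i).val : ℕ) : ZMod (p * (p^d * p))) ^ 2 := by
  rw [Finset.mul_sum]
  refine Finset.sum_congr rfl fun i _ => ?_
  rw [mu_eq_mul]
  ring

lemma zcnt_eq (m : ℕ) (a : Fin m → ℤ) (d : ℕ) (C' : ℤ) :
    zcnt m a (p * (p^d * p)) ((p:ℤ)^2 * C') = p ^ m * cnt m a (p^d) C' := by
  classical
  haveI : NeZero p := ⟨(Fact.out : p.Prime).ne_zero⟩
  haveI : NeZero (p^d) := ⟨pow_ne_zero _ (Fact.out : p.Prime).ne_zero⟩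
  haveI : NeZero (p^d * p) := ⟨Nat.mul_ne_zero (pow_ne_zero _ (Fact.out : p.Prime).ne_zero) (Fact.out : p.Prime).ne_zero⟩
  haveI : NeZero (p * (p^d * p)) := ⟨Nat.mul_ne_zero (Fact.out : p.Prime).ne_zero (NeZero.ne _)⟩
  have hdvd : (p^d : ℕ) ∣ p * (p^d * p) := ⟨p * p, by ring⟩
  have hcond : ∀ y : Fin m → ZMod (p^d * p),
      ((∑ i, (a i : ZMod (p * (p^d * p))) * (mu p (p^d * p) (y i)) ^ 2
          = (((p:ℤ)^2 * C' : ℤ) : ZMod (p * (p^d * p))))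
        ↔ (∑ i, (a i : ZMod (p^d)) * (((y i).val : ℕ) : ZMod (p^d)) ^ 2
          = (C' : ZMod (p^d)))) := by
    intro y
    rw [hQ_mu]
    have hC : (((p:ℤ)^2 * C' : ℤ) : ZMod (p * (p^d * p)))
        = ((p : ZMod (p * (p^d * p)))) ^ 2 * (C' : ZMod (p * (p^d * p))) := by
      push_cast; ring
    rw [hC]
    have hsq : ((p : ZMod (p * (p^d * p)))) ^ 2 = ((p^2 : ℕ) : ZMod (p * (p^d * p))) := by
      push_cast; ring
    rw [hsq]
    rw [cancel_gen (p^d) (p^2) (p * (p^d * p)) (by ring) hdvd]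
    constructor
    · intro h
      rw [map_sum] at h
      rw [show ZMod.castHom hdvd (ZMod (p^d)) (C' : ZMod (p * (p^d * p)))
          = (C' : ZMod (p^d)) from map_intCast _ _] at h
      rw [← h]
      refine Finset.sum_congr rfl fun i _ => ?_
      rw [map_mul, map_pow, map_intCast, map_natCast]
    · intro h
      rw [map_sum, show ZMod.castHom hdvd (ZMod (p^d)) (C' : ZMod (p * (p^d * p)))
          = (C' : ZMod (p^d)) from map_intCast _ _, ← h]
      refine Finset.sum_congr rfl fun i _ => ?_
      rw [map_mul, map_pow, map_intCast, map_natCast]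
  -- step A : bijection with y-counting
  rw [zcnt, ncard_eq_filter]
  rw [show ((univ.filter fun x : Fin m → ZMod (p * (p^d * p)) =>
      (∑ i, (a i : ZMod (p * (p^d * p))) * x i ^ 2
        = (((p:ℤ)^2 * C' : ℤ) : ZMod (p * (p^d * p))))
        ∧ ∀ i, ¬ IsUnit (x i)).card)
    = ((univ.filter fun y : Fin m → ZMod (p^d * p) =>
        ∑ i, (a i : ZMod (p^d)) * (((y i).val : ℕ) : ZMod (p^d)) ^ 2
          = (C' : ZMod (p^d))).card) from ?_]
  · -- step B : fiberwise count over reduction to ZMod (p^d)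
    rw [Finset.card_eq_sum_card_fiberwise
      (f := fun (y : Fin m → ZMod (p^d * p)) => fun j => (((y j).val : ℕ) : ZMod (p^d)))
      (t := univ.filter fun z : Fin m → ZMod (p^d) =>
        ∑ i, (a i : ZMod (p^d)) * z i ^ 2 = (C' : ZMod (p^d)))
      (fun y hy => mem_filter.mpr ⟨mem_univ _, (mem_filter.mp hy).2⟩)]
    rw [Finset.sum_congr rfl (fun z hz => ?_), Finset.sum_const, smul_eq_mul, mul_comm,
      cnt, ncard_eq_filter]
    rw [Finset.filter_filter]
    have hz' : ∑ i, (a i : ZMod (p^d)) * z i ^ 2 = (C' : ZMod (p^d)) := (mem_filter.mp hz).2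
    rw [show (univ.filter fun y : Fin m → ZMod (p^d * p) =>
        (∑ i, (a i : ZMod (p^d)) * (((y i).val : ℕ) : ZMod (p^d)) ^ 2 = (C' : ZMod (p^d)))
          ∧ (fun j => (((y j).val : ℕ) : ZMod (p^d))) = z)
      = (univ.filter fun y : Fin m → ZMod (p^d * p) =>
        (fun j => (((y j).val : ℕ) : ZMod (p^d))) = z) from ?_]
    · exact fiber_count p (p^d) m z
    · refine Finset.filter_congr fun y _ => ?_
      constructor
      · exact fun h => h.2
      · intro h
        refine ⟨?_, h⟩
        rw [← hz']
        exact Finset.sum_congr rfl fun i _ => by rw [congrFun h i]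
  · -- the bijection x = mu ∘ y
    refine Finset.card_bij'
      (fun x _ => fun i => nu p (p^d * p) (x i))
      (fun y _ => fun i => mu p (p^d * p) (y i)) ?_ ?_ ?_ ?_
    · intro x hx
      obtain ⟨-, hxsol, hxnu⟩ := mem_filter.mp hx
      have hxeq : ∀ i, mu p (p^d * p) (nu p (p^d * p) (x i)) = x i := by
        intro i
        refine mu_nu _ _ _ ?_
        by_contra hnd
        exact hxnu i ((unit_iff_gen p (p * (p^d * p)) (d + 2) (by omega) (by ring) (x i)).mpr hnd)
      refine mem_filter.mpr ⟨mem_univ _, (hcond _).mp ?_⟩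
      rw [Finset.sum_congr rfl (fun i (_ : i ∈ univ) => by rw [hxeq i])]
      exact hxsol
    · intro y hy
      have hysol := (mem_filter.mp hy).2
      refine mem_filter.mpr ⟨mem_univ _, (hcond y).mpr hysol, ?_⟩
      intro i hUnit
      have hpv : p ∣ (mu p (p^d * p) (y i)).val := by
        rw [mu_val]
        exact Dvd.intro _ rfl
      exact ((unit_iff_gen p (p * (p^d * p)) (d + 2) (by omega) (by ring)
        (mu p (p^d * p) (y i))).mp hUnit) hpv
    · intro x hx
      obtain ⟨-, -, hxnu⟩ := mem_filter.mp hx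
      have hxeq : ∀ i, mu p (p^d * p) (nu p (p^d * p) (x i)) = x i := by
        intro i
        refine mu_nu _ _ _ ?_
        by_contra hnd
        exact hxnu i ((unit_iff_gen p (p * (p^d * p)) (d + 2) (by omega) (by ring) (x i)).mpr hnd)
      funext i
      dsimp only
      rw [hxeq i]
    · intro y _
      funext i
      dsimp only
      rw [nu_mu]

end PartB2

section PartB3
variable (p : ℕ) [Fact p.Prime]

lemma zcnt_zero (m : ℕ) (a : Fin m → ℤ) (d : ℕ) (u : ℤ) (hu : ¬ ((p:ℤ)^2 ∣ u)) :
    zcnt m a (p * (p^d * p)) u = 0 := by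
  classical
  haveI : NeZero p := ⟨(Fact.out : p.Prime).ne_zero⟩
  haveI : NeZero (p^d * p) := ⟨Nat.mul_ne_zero (pow_ne_zero _ (Fact.out : p.Prime).ne_zero) (Fact.out : p.Prime).ne_zero⟩
  haveI : NeZero (p * (p^d * p)) := ⟨Nat.mul_ne_zero (Fact.out : p.Prime).ne_zero (NeZero.ne _)⟩
  haveI : NeZero ((p:ℕ)^2) := ⟨pow_ne_zero _ (Fact.out : p.Prime).ne_zero⟩
  rw [zcnt]
  rw [Nat.card_eq_zero]
  left
  rw [isEmpty_subtype]
  rintro x ⟨hxsol, hxnu⟩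
  have hxeq : ∀ i, mu p (p^d * p) (nu p (p^d * p) (x i)) = x i := by
    intro i
    refine mu_nu _ _ _ ?_
    by_contra hnd
    exact hxnu i ((unit_iff_gen p (p * (p^d * p)) (d + 2) (by omega) (by ring) (x i)).mpr hnd)
  have hsum : ((p : ZMod (p * (p^d * p)))) ^ 2
      * ∑ i, (a i : ZMod (p * (p^d * p)))
          * (((nu p (p^d * p) (x i)).val : ℕ) : ZMod (p * (p^d * p))) ^ 2
      = (u : ZMod (p * (p^d * p))) := by
    rw [← hQ_mu, Finset.sum_congr rfl (fun i (_ : i ∈ univ) => by rw [hxeq i])]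
    exact hxsol
  have hdvd2 : (p^2 : ℕ) ∣ p * (p^d * p) := ⟨p^d, by ring⟩
  have happ := congrArg (ZMod.castHom hdvd2 (ZMod (p^2))) hsum
  rw [map_mul, map_pow, map_natCast, map_intCast] at happ
  rw [show ((p : ZMod (p^2))) ^ 2 = ((p^2 : ℕ) : ZMod (p^2)) by push_cast; ring] at happ
  rw [ZMod.natCast_self, zero_mul] at happ
  have : ((p^2 : ℕ) : ℤ) ∣ u := (ZMod.intCast_zmod_eq_zero_iff_dvd u (p^2)).mp happ.symm
  apply hu
  exact_mod_cast this

lemma cnt_split (m : ℕ) (a : Fin m → ℤ) (n : ℕ) [NeZero n] (C : ℤ) :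
    cnt m a n C = pcnt m a n C + zcnt m a n C := by
  classical
  rw [cnt, pcnt, zcnt, ncard_eq_filter, ncard_eq_filter, ncard_eq_filter]
  have h := Finset.card_filter_add_card_filter_not
    (s := univ.filter fun x : Fin m → ZMod n =>
      ∑ i, (a i : ZMod n) * x i ^ 2 = (C : ZMod n))
    (p := fun x => ∃ i, IsUnit (x i))
  rw [Finset.filter_filter, Finset.filter_filter] at h
  rw [← h]
  congr 1
  apply congrArg
  refine Finset.filter_congr fun x _ => ?_
  simp [not_exists]

lemma cnt_le_pcnt_add_one (m : ℕ) (a : Fin m → ℤ) (C : ℤ) :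
    cnt m a p C ≤ pcnt m a p C + 1 := by
  classical
  haveI : NeZero p := ⟨(Fact.out : p.Prime).ne_zero⟩
  rw [cnt_split m a p C]
  have hz : zcnt m a p C ≤ 1 := by
    rw [zcnt, ncard_eq_filter]
    refine Finset.card_le_one.mpr ?_
    intro x hx y hy
    obtain ⟨-, -, hxz⟩ := mem_filter.mp hx
    obtain ⟨-, -, hyz⟩ := mem_filter.mp hy
    funext i
    have h1 : x i = 0 := by
      by_contra h
      exact hxz i (isUnit_iff_ne_zero.mpr h)
    have h2 : y i = 0 := by
      by_contra h
      exact hyz i (isUnit_iff_ne_zero.mpr h)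
    rw [h1, h2]
  omega

lemma cnt_ge (m : ℕ) (hm : 1 ≤ m) (a : Fin m → ℤ) (ha : ∀ i, ¬ (p:ℤ) ∣ a i)
    (hp2 : p ≠ 2) (C : ℤ) :
    (p:ℤ) ^ (m-1) - Bnd p m ≤ (cnt m a p C : ℤ) := by
  classical
  haveI : NeZero p := ⟨(Fact.out : p.Prime).ne_zero⟩
  set b : ℕ → ZMod p := fun j => if h : j < m then ((a ⟨j, h⟩ : ℤ) : ZMod p) else 1 with hb
  have hbne : ∀ i, b i ≠ 0 := by
    intro i
    rw [hb]
    dsimp only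
    split
    · intro h
      exact ha _ ((ZMod.intCast_zmod_eq_zero_iff_dvd _ p).mp h)
    · exact one_ne_zero
  have hcnt : cnt m a p C = Scnt p b m ((C : ZMod p)) := by
    rw [cnt, ncard_eq_filter, Scnt]
    congr 1
    refine Finset.filter_congr fun x _ => ?_
    have hi : ∀ i : Fin m, (a i : ZMod p) * x i ^ 2 = b i.1 * x i ^ 2 := by
      intro i
      rw [hb]
      simp [i.isLt]
    rw [Finset.sum_congr rfl fun i _ => hi i]
  rw [hcnt]
  have := ((partA p hp2 m hm b hbne ((C : ZMod p))).1)
  have h2 := (abs_le.mp this).1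
  linarith

end PartB3

section PartB4
variable (p : ℕ) [Fact p.Prime]

lemma pcnt_pow (m : ℕ) (a : Fin m → ℤ) (ha : ∀ i, ¬ (p:ℤ) ∣ a i) (hp2 : p ≠ 2) (C : ℤ) :
    ∀ e, 1 ≤ e → pcnt m a (p^e) C = p ^ ((m-1)*(e-1)) * pcnt m a p C := by
  refine Nat.le_induction ?_ ?_
  · rw [pow_one]
    simp
  · intro e he IH
    rw [pow_succ, pcnt_step p m a ha hp2 e he C, IH]
    rw [show (m-1)*(e+1-1) = (m-1) + (m-1)*(e-1) by
      obtain ⟨f, rfl⟩ : ∃ f, e = f + 1 := ⟨e - 1, by omega⟩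
      simp [Nat.add_sub_cancel]
      ring]
    rw [pow_add]
    ring

lemma main_formula (m : ℕ) (a : Fin m → ℤ) (ha : ∀ i, ¬ (p:ℤ) ∣ a i) (hp2 : p ≠ 2)
    (k : ℕ) : ∀ u : ℤ, ¬ ((p:ℤ)^2 ∣ u) → ∀ e, 2*k+2 ≤ e →
    cnt m a (p^e) ((p:ℤ)^(2*k) * u)
      = ∑ j ∈ Finset.range (k+1),
          p^(m*j) * (p^((m-1)*(e-2*j-1)) * pcnt m a p ((p:ℤ)^(2*(k-j)) * u)) := by
  haveI : NeZero p := ⟨(Fact.out : p.Prime).ne_zero⟩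
  induction k with
  | zero =>
    intro u hu e he
    haveI : NeZero ((p:ℕ)^e) := ⟨pow_ne_zero _ (Fact.out : p.Prime).ne_zero⟩
    rw [Finset.sum_range_one]
    obtain ⟨f, rfl⟩ : ∃ f, e = f + 2 := ⟨e - 2, by omega⟩
    rw [cnt_split m a (p^(f+2)) ((p:ℤ)^(2*0) * u)]
    rw [show zcnt m a (p^(f+2)) ((p:ℤ)^(2*0) * u) = 0 from ?_]
    · rw [add_zero, pcnt_pow p m a ha hp2 ((p:ℤ)^(2*0) * u) (f+2) (by omega)]
      norm_num
    · rw [show (p:ℕ)^(f+2) = p * (p^f * p) by ring]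
      refine zcnt_zero p m a f ((p:ℤ)^(2*0) * u) ?_
      intro hdvd
      exact hu (by
        rw [show (p:ℤ)^(2*0) * u = u by norm_num] at hdvd
        exact hdvd)
  | succ k IH =>
    intro u hu e he
    haveI : NeZero ((p:ℕ)^e) := ⟨pow_ne_zero _ (Fact.out : p.Prime).ne_zero⟩
    obtain ⟨f, rfl⟩ : ∃ f, e = f + 2 := ⟨e - 2, by omega⟩
    rw [cnt_split m a (p^(f+2)) ((p:ℤ)^(2*(k+1)) * u)]
    rw [show zcnt m a (p^(f+2)) ((p:ℤ)^(2*(k+1)) * u)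
        = p^m * cnt m a (p^f) ((p:ℤ)^(2*k) * u) from ?_]
    · rw [pcnt_pow p m a ha hp2 ((p:ℤ)^(2*(k+1)) * u) (f+2) (by omega)]
      rw [IH u hu f (by omega)]
      conv_rhs => rw [Finset.sum_range_succ']
      rw [add_comm]
      congr 1
      · rw [Finset.mul_sum]
        refine Finset.sum_congr rfl fun j hj => ?_
        have hjk : j ≤ k := by
          have := Finset.mem_range.mp hj; omega
        rw [show m*(j+1) = m + m*j by ring, pow_add]
        rw [show (f+2) - 2*(j+1) - 1 = f - 2*j - 1 by omega]
        rw [show k + 1 - (j+1) = k - j by omega]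
        ring
      · rw [show m*0 = 0 by ring, pow_zero, one_mul]
        rw [show (f+2) - 2*0 - 1 = f + 1 by omega]
        rw [show k + 1 - 0 = k + 1 by omega]
        rw [show (f+2) - 1 = f + 1 by omega]
    · rw [show (p:ℕ)^(f+2) = p * (p^f * p) by ring]
      rw [show (p:ℤ)^(2*(k+1)) * u = (p:ℤ)^2 * ((p:ℤ)^(2*k) * u) by ring]
      exact zcnt_eq p m a f ((p:ℤ)^(2*k) * u)

end PartB4

section Final
variable (p : ℕ) [Fact p.Prime]

lemma cnt_scaling (m : ℕ) (a : Fin m → ℤ) (ha : ∀ i, ¬ (p:ℤ) ∣ a i) (hp2 : p ≠ 2)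
    (k : ℕ) (u : ℤ) (hu : ¬ ((p:ℤ)^2 ∣ u)) (e : ℕ) (he : 2*k+2 ≤ e) :
    cnt m a (p^e) ((p:ℤ)^(2*k) * u)
      = p ^ ((m-1)*(e-(2*k+2))) * cnt m a (p^(2*k+2)) ((p:ℤ)^(2*k) * u) := by
  rw [main_formula p m a ha hp2 k u hu e he,
    main_formula p m a ha hp2 k u hu (2*k+2) le_rfl, Finset.mul_sum]
  refine Finset.sum_congr rfl fun j hj => ?_
  have hjk : j ≤ k := by have := Finset.mem_range.mp hj; omega
  have h1 : e - 2*j - 1 = (e - (2*k+2)) + (2*k+2 - 2*j - 1) := by omega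
  rw [h1, Nat.mul_add, pow_add]
  ring

lemma cnt_lower (m : ℕ) (a : Fin m → ℤ) (ha : ∀ i, ¬ (p:ℤ) ∣ a i) (hp2 : p ≠ 2)
    (k : ℕ) (u : ℤ) (hu : ¬ ((p:ℤ)^2 ∣ u)) :
    p ^ ((m-1)*(2*k+1)) * pcnt m a p ((p:ℤ)^(2*k) * u)
      ≤ cnt m a (p^(2*k+2)) ((p:ℤ)^(2*k) * u) := by
  rw [main_formula p m a ha hp2 k u hu (2*k+2) le_rfl]
  have h0 := Finset.single_le_sum
    (f := fun j => p^(m*j) * (p^((m-1)*(2*k+2-2*j-1)) * pcnt m a p ((p:ℤ)^(2*(k-j)) * u)))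
    (fun j _ => Nat.zero_le _) (Finset.mem_range.mpr (Nat.succ_pos k))
  calc p ^ ((m-1)*(2*k+1)) * pcnt m a p ((p:ℤ)^(2*k) * u)
      = p^(m*0) * (p^((m-1)*(2*k+2-2*0-1)) * pcnt m a p ((p:ℤ)^(2*(k-0)) * u)) := by
        norm_num
    _ ≤ _ := h0

lemma pcnt_lower (m : ℕ) (hm : 1 ≤ m) (a : Fin m → ℤ) (ha : ∀ i, ¬ (p:ℤ) ∣ a i)
    (hp2 : p ≠ 2) (C : ℤ) :
    (p:ℤ) ^ (m-1) - (Bnd p m + 1) ≤ (pcnt m a p C : ℤ) := by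
  have h1 := cnt_ge p m hm a ha hp2 C
  have h2 := cnt_le_pcnt_add_one p m a C
  have h3 : (cnt m a p C : ℤ) ≤ (pcnt m a p C : ℤ) + 1 := by exact_mod_cast h2
  linarith

lemma Bnd_sq (hp2 : p ≠ 2) (m : ℕ) (hm : 3 ≤ m) :
    (Bnd p m + 1)^2 ≤ (p:ℤ)^m := by
  have hp3 : (3:ℤ) ≤ (p:ℤ) := by
    have := (Fact.out : p.Prime).two_le
    have : 2 ≤ p := this
    have hne : p ≠ 2 := hp2
    exact_mod_cast (by omega : 3 ≤ p)
  unfold Bnd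
  rcases Nat.even_or_odd m with he | ho
  · have h2 : m % 2 = 0 := Nat.even_iff.mp he
    rw [if_neg (by omega)]
    have hr : (1:ℤ) ≤ (p:ℤ)^(m/2 - 1) := one_le_pow₀ (by linarith)
    have hkey : ((p:ℤ) - 1) * (p:ℤ)^(m/2 - 1) + 1 ≤ (p:ℤ)^(m/2) := by
      have hexp : m/2 = (m/2 - 1) + 1 := by omega
      conv_rhs => rw [hexp, pow_succ]
      nlinarith
    have hnn : (0:ℤ) ≤ ((p:ℤ) - 1) * (p:ℤ)^(m/2 - 1) + 1 := by nlinarith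
    have := mul_le_mul hkey hkey hnn (by positivity)
    calc (((p:ℤ) - 1) * (p:ℤ)^(m/2 - 1) + 1)^2
        ≤ ((p:ℤ)^(m/2))^2 := by nlinarith
      _ = (p:ℤ)^m := by
          rw [← pow_mul]
          congr 1
          omega
  · have h2 : m % 2 = 1 := Nat.odd_iff.mp ho
    rw [if_pos h2]
    set q : ℤ := (p:ℤ)^((m-1)/2) with hq
    have hq2 : q^2 = (p:ℤ)^(m-1) := by
      rw [hq, ← pow_mul]
      congr 1
      omega
    have hq_le : q ≤ (p:ℤ)^(m-2) := by
      rw [hq]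
      exact pow_le_pow_right₀ (by linarith) (by omega)
    have h1q : (1:ℤ) ≤ q := one_le_pow₀ (by linarith)
    have hpm2 : (1:ℤ) ≤ (p:ℤ)^(m-2) := one_le_pow₀ (by linarith)
    have hpow : (p:ℤ)^m = (p:ℤ) * (p:ℤ)^(m-1) := by
      rw [← pow_succ']
      congr 1
      omega
    have hpow2 : (p:ℤ)^(m-1) = (p:ℤ) * (p:ℤ)^(m-2) := by
      rw [← pow_succ']
      congr 1
      omega
    -- (q+1)^2 = q^2 + 2q + 1 ≤ p^{m-1} + 2 p^{m-2} + 1 ≤ p^{m-1} + 3p^{m-2} ≤ p^{m-1} + p^{m-1} ≤ p * p^{m-1}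
    nlinarith [hq2, hq_le, h1q, hpm2, hpow, hpow2]

lemma Bnd_nonneg (m : ℕ) : 0 ≤ Bnd p m := by
  have hp1 : (1:ℤ) ≤ (p:ℤ) := by exact_mod_cast (Fact.out : p.Prime).one_lt.le
  unfold Bnd
  split
  · positivity
  · have : (0:ℤ) ≤ (p:ℤ) - 1 := by linarith
    positivity

lemma Bnd_real (hp2 : p ≠ 2) (m : ℕ) (hm : 3 ≤ m) :
    ((Bnd p m : ℝ) + 1) ≤ (p:ℝ) ^ ((m:ℝ)/2) := by
  have hsq : ((Bnd p m : ℝ) + 1)^2 ≤ (p:ℝ)^(m:ℕ) := by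
    exact_mod_cast Bnd_sq p hp2 m hm
  have hnn : (0:ℝ) ≤ (Bnd p m : ℝ) + 1 := by
    have := Bnd_nonneg p m
    have : (0:ℝ) ≤ (Bnd p m : ℝ) := by exact_mod_cast this
    linarith
  have hp0 : (0:ℝ) < (p:ℝ) := by
    have := (Fact.out : p.Prime).pos
    exact_mod_cast this
  have h1 : ((Bnd p m : ℝ) + 1) ≤ Real.sqrt ((p:ℝ)^(m:ℕ)) := by
    have hy : (0:ℝ) ≤ (p:ℝ)^(m:ℕ) := by positivity
    nlinarith [Real.sq_sqrt hy, Real.sqrt_nonneg ((p:ℝ)^(m:ℕ)), hsq, hnn]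
  refine h1.trans (le_of_eq ?_)
  rw [Real.sqrt_eq_rpow, ← Real.rpow_natCast (p:ℝ) m, ← Real.rpow_mul hp0.le]
  congr 1
  ring

end Final

end NLaux


open Filter


end Aux

/-- Let `p` be an odd prime, `m ≥ 3`, `a₁, …, a_m` integers prime to `p`, `u` a nonzero
squarefree integer, and `k ≥ 0`.  If `N e` denotes the number of solutions
`x ∈ (ℤ/p^e)^m` of `∑ aᵢ xᵢ² = p^(2k)·u`, then `N e / p^((m-1)e)` converges as
`e → ∞`, and its limit is at least `(1 - 2·p^(1-m/2)) / (1 - p^(1-m/2))`. -/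
theorem statement6 (p : ℕ) (hp : p.Prime) (hodd : p ≠ 2)
    (m : ℕ) (hm : 3 ≤ m)
    (a : Fin m → ℤ) (ha : ∀ i, ¬ (p : ℤ) ∣ a i)
    (u : ℤ) (hu : Squarefree u) (hu0 : u ≠ 0) (k : ℕ)
    (N : ℕ → ℕ)
    (hN : ∀ e : ℕ, 1 ≤ e →
      N e = Nat.card {x : Fin m → ZMod (p ^ e) //
        ∑ i, (a i : ZMod (p ^ e)) * (x i) ^ 2
          = (((p : ℤ) ^ (2 * k) * u : ℤ) : ZMod (p ^ e))}) :
    ∃ L : ℝ,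
      Tendsto (fun e : ℕ => (N e : ℝ) / (p : ℝ) ^ ((m - 1) * e)) atTop (nhds L) ∧
      (1 - 2 * (p : ℝ) ^ ((2 - (m : ℝ)) / 2)) / (1 - (p : ℝ) ^ ((2 - (m : ℝ)) / 2))
        ≤ L := by
  classical
  haveI : Fact p.Prime := ⟨hp⟩
  haveI : NeZero p := ⟨hp.ne_zero⟩
  have hp3 : 3 ≤ p := by
    have := hp.two_le
    omega
  have hu2 : ¬ ((p:ℤ)^2 ∣ u) := by
    intro hdvd
    have hPU := hu (p:ℤ) (by rw [← sq]; exact hdvd)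
    rw [Int.isUnit_iff] at hPU
    rcases hPU with h | h
    · have : p = 1 := by exact_mod_cast h
      omega
    · have h0 : (0:ℤ) ≤ (p:ℤ) := by positivity
      omega
  have hNe : ∀ e, 2*k+2 ≤ e → N e = NLaux.cnt m a (p^e) ((p:ℤ)^(2*k) * u) := by
    intro e he
    rw [hN e (by omega)]
    rfl
  have hppos : (0:ℝ) < (p:ℝ) := by positivity
  refine ⟨(NLaux.cnt m a (p^(2*k+2)) ((p:ℤ)^(2*k) * u) : ℝ) / (p:ℝ)^((m-1)*(2*k+2)),
    ?_, ?_⟩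
  · have hscale : ∀ e, 2*k+2 ≤ e → (N e : ℝ) / (p:ℝ)^((m-1)*e)
        = (NLaux.cnt m a (p^(2*k+2)) ((p:ℤ)^(2*k) * u) : ℝ) / (p:ℝ)^((m-1)*(2*k+2)) := by
      intro e he
      rw [hNe e he, NLaux.cnt_scaling p m a ha hodd k u hu2 e he]
      have hpow : (p:ℝ)^((m-1)*e)
          = (p:ℝ)^((m-1)*(e-(2*k+2))) * (p:ℝ)^((m-1)*(2*k+2)) := by
        rw [← pow_add, ← Nat.mul_add]
        congr 2
        omega
      rw [hpow]
      push_cast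
      rw [mul_div_mul_left _ _ (by positivity : ((p:ℝ)^((m-1)*(e-(2*k+2))) : ℝ) ≠ 0)]
    refine Tendsto.congr' ?_ tendsto_const_nhds
    filter_upwards [eventually_ge_atTop (2*k+2)] with e he
    exact (hscale e he).symm
  · set t : ℝ := (p:ℝ) ^ ((2 - (m:ℝ))/2) with ht
    have hm3 : (3:ℝ) ≤ (m:ℝ) := by exact_mod_cast hm
    have hp3' : (3:ℝ) ≤ (p:ℝ) := by exact_mod_cast hp3
    have ht0 : 0 < t := Real.rpow_pos_of_pos hppos _
    have ht1 : t < 1 :=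
      Real.rpow_lt_one_of_one_lt_of_neg (by linarith) (by linarith)
    have hpm1 : (0:ℝ) < (p:ℝ)^(m-1 : ℕ) := by positivity
    have hkey : t * (p:ℝ)^(m-1 : ℕ) = (p:ℝ) ^ ((m:ℝ)/2) := by
      rw [ht, ← Real.rpow_natCast (p:ℝ) (m-1), ← Real.rpow_add hppos]
      congr 1
      have hcast : ((m - 1 : ℕ) : ℝ) = (m:ℝ) - 1 := by
        push_cast [Nat.cast_sub (by omega : 1 ≤ m)]
        ring
      rw [hcast]
      ring
    have hL1 : (NLaux.pcnt m a p ((p:ℤ)^(2*k) * u) : ℝ) / (p:ℝ)^(m-1 : ℕ)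
        ≤ (NLaux.cnt m a (p^(2*k+2)) ((p:ℤ)^(2*k) * u) : ℝ) / (p:ℝ)^((m-1)*(2*k+2)) := by
      have hnum := NLaux.cnt_lower p m a ha hodd k u hu2
      have hnum' : ((p:ℝ) ^ ((m-1)*(2*k+1)) * (NLaux.pcnt m a p ((p:ℤ)^(2*k) * u) : ℝ))
          ≤ (NLaux.cnt m a (p^(2*k+2)) ((p:ℤ)^(2*k) * u) : ℝ) := by
        exact_mod_cast hnum
      have hden : (p:ℝ)^((m-1)*(2*k+2)) = (p:ℝ)^((m-1)*(2*k+1)) * (p:ℝ)^(m-1 : ℕ) := by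
        rw [show (m-1)*(2*k+2) = (m-1)*(2*k+1) + (m-1) from by ring, pow_add]
      rw [hden]
      have h2 : (NLaux.pcnt m a p ((p:ℤ)^(2*k) * u) : ℝ) / (p:ℝ)^(m-1 : ℕ)
          = ((p:ℝ)^((m-1)*(2*k+1)) * (NLaux.pcnt m a p ((p:ℤ)^(2*k) * u) : ℝ))
            / ((p:ℝ)^((m-1)*(2*k+1)) * (p:ℝ)^(m-1 : ℕ)) := by
        rw [mul_div_mul_left _ _ (by positivity : ((p:ℝ)^((m-1)*(2*k+1)) : ℝ) ≠ 0)]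
      rw [h2]
      rw [div_le_div_iff_of_pos_right (by positivity)]
      exact hnum'
    have hpcnt : (p:ℝ)^(m-1 : ℕ) - ((NLaux.Bnd p m : ℝ) + 1)
        ≤ (NLaux.pcnt m a p ((p:ℤ)^(2*k) * u) : ℝ) := by
      have h0 := NLaux.pcnt_lower p m (by omega) a ha hodd ((p:ℤ)^(2*k) * u)
      have h' : (((p:ℤ)^(m-1) - (NLaux.Bnd p m + 1) : ℤ) : ℝ)
          ≤ ((NLaux.pcnt m a p ((p:ℤ)^(2*k) * u) : ℕ) : ℝ) := by
        exact_mod_cast h0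
      push_cast at h'
      linarith
    have hBt : (NLaux.Bnd p m : ℝ) + 1 ≤ t * (p:ℝ)^(m-1 : ℕ) := by
      rw [hkey]
      exact NLaux.Bnd_real p hodd m hm
    have h1t : 0 < 1 - t := by linarith
    have hfrac : (1 - 2*t)/(1 - t) ≤ 1 - t := by
      rw [div_le_iff₀ h1t]
      nlinarith
    have hfrac2 : 1 - t ≤ (NLaux.pcnt m a p ((p:ℤ)^(2*k) * u) : ℝ) / (p:ℝ)^(m-1 : ℕ) := by
      rw [le_div_iff₀ hpm1]
      nlinarith [hpcnt, hBt]
    linarith [hL1, hfrac, hfrac2]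
end

section
/- Let m ≥ 1 and let M be a symmetric m×m matrix with rational entries, defining the bilinear form B(x, y) = xᵀ·M·y on ℚ^m and, by extension of scalars, on ℝ^m. Let v, v' ∈ ℚ^m with B(v, v) ≠ 0, let g : ℝ^m → ℝ^m be an ℝ-linear map satisfying B(g x, g y) = B(x, y) for all x, y ∈ ℝ^m, and suppose g(v) = λ • v' for some λ ∈ ℝ (viewing v, v' in ℝ^m via the coordinate inclusion). Then λ is rational if and only if there exists q ∈ ℚ with B(v, v) = q² · B(v', v'). -/
open Matrix

lemma cast_dot (m : ℕ) (M : Matrix (Fin m) (Fin m) ℚ) (w w' : Fin m → ℚ) :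
    dotProduct (fun i => (w i : ℝ))
      ((M.map (fun q : ℚ => (q : ℝ))).mulVec (fun i => (w' i : ℝ)))
      = ((dotProduct w (M.mulVec w') : ℚ) : ℝ) := by
  simp [dotProduct, Matrix.mulVec, Finset.mul_sum]

/-- Let `M` be a symmetric rational `m × m` matrix defining the bilinear form
`B(x,y) = xᵀ M y` on `ℚ^m` and on `ℝ^m`.  Let `v, v' ∈ ℚ^m` with `B(v,v) ≠ 0`, let
`g : ℝ^m → ℝ^m` be an `ℝ`-linear map preserving `B`, and suppose `g v = λ • v'`.
Then `λ` is rational iff `B(v,v) = q² · B(v',v')` for some rational `q`. -/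
theorem statement7 (m : ℕ) (hm : 1 ≤ m)
    (M : Matrix (Fin m) (Fin m) ℚ) (hM : M.IsSymm)
    (v v' : Fin m → ℚ)
    (hv : dotProduct v (M.mulVec v) ≠ 0)
    (g : (Fin m → ℝ) →ₗ[ℝ] (Fin m → ℝ))
    (hg : ∀ x y : Fin m → ℝ,
      dotProduct (g x) ((M.map (fun q : ℚ => (q : ℝ))).mulVec (g y))
        = dotProduct x ((M.map (fun q : ℚ => (q : ℝ))).mulVec y))
    (lam : ℝ)
    (hgv : g (fun i => (v i : ℝ)) = lam • (fun i => (v' i : ℝ))) :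
    (∃ q : ℚ, (q : ℝ) = lam) ↔
      ∃ q : ℚ, dotProduct v (M.mulVec v)
        = q ^ 2 * dotProduct v' (M.mulVec v') := by
  have key : ((dotProduct v (M.mulVec v) : ℚ) : ℝ)
      = lam ^ 2 * ((dotProduct v' (M.mulVec v') : ℚ) : ℝ) := by
    have h := hg (fun i => (v i : ℝ)) (fun i => (v i : ℝ))
    rw [hgv] at h
    rw [cast_dot] at h
    rw [← h]
    rw [Matrix.mulVec_smul, dotProduct_smul, smul_dotProduct,
      cast_dot]
    simp only [smul_eq_mul]
    ring
  have hv' : dotProduct v' (M.mulVec v') ≠ 0 := by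
    intro h0
    apply hv
    have : ((dotProduct v (M.mulVec v) : ℚ) : ℝ) = 0 := by
      rw [key, h0]; push_cast; ring
    exact_mod_cast this
  constructor
  · rintro ⟨q, rfl⟩
    refine ⟨q, ?_⟩
    have : ((dotProduct v (M.mulVec v) : ℚ) : ℝ)
        = ((q ^ 2 * dotProduct v' (M.mulVec v') : ℚ) : ℝ) := by
      push_cast; exact key
    exact_mod_cast this
  · rintro ⟨q, hq⟩
    have hlam2 : lam ^ 2 = (q : ℝ) ^ 2 := by
      have hv'R : ((dotProduct v' (M.mulVec v') : ℚ) : ℝ) ≠ 0 := by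
        exact_mod_cast hv'
      have : (q : ℝ) ^ 2 * ((dotProduct v' (M.mulVec v') : ℚ) : ℝ)
          = lam ^ 2 * ((dotProduct v' (M.mulVec v') : ℚ) : ℝ) := by
        rw [← key]; exact_mod_cast hq.symm
      exact (mul_right_cancel₀ hv'R this).symm
    rcases sq_eq_sq_iff_eq_or_eq_neg.mp hlam2 with h | h
    · exact ⟨q, h.symm⟩
    · exact ⟨-q, by push_cast; exact h.symm⟩
end
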